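/- arXiv:2312.00753 — 6 statements merged into one kernel-verified Lean document; each statement's English description precedes it below -/
import Mathlib

section
/- There is no matrix g in SL(2,ℤ) such that |tr(g·M_i)| ≤ 2 for all four matrices M_1 = [[1,0],[0,1]], M_2 = [[-3,2],[-2,1]], M_3 = [[1,2],[-2,-3]], M_4 = [[1,-2],[4,-7]]. -/
/-- There is no matrix `g` in `SL(2, ℤ)` (i.e., a 2×2 integer matrix of determinant 1)
such that `|tr (g * Mᵢ)| ≤ 2` for all four matrices
`M₁ = [[1,0],[0,1]]`, `M₂ = [[-3,2],[-2,1]]`, `M₃ = [[1,2],[-2,-3]]`, `M₄ = [[1,-2],[4,-7]]`. -/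
theorem no_small_trace_translate :
    ¬ ∃ g : Matrix (Fin 2) (Fin 2) ℤ, g.det = 1 ∧
      |(g * !![1, 0; 0, 1]).trace| ≤ 2 ∧
      |(g * !![-3, 2; -2, 1]).trace| ≤ 2 ∧
      |(g * !![1, 2; -2, -3]).trace| ≤ 2 ∧
      |(g * !![1, -2; 4, -7]).trace| ≤ 2 := by
  rintro ⟨g, hdet, h1, h2, h3, h4⟩
  obtain ⟨a, b, c, d, rfl⟩ : ∃ a b c d : ℤ, g = !![a, b; c, d] :=
    ⟨g 0 0, g 0 1, g 1 0, g 1 1, (Matrix.eta_fin_two g)⟩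
  rw [Matrix.det_fin_two_of] at hdet
  rw [abs_le] at h1 h2 h3 h4
  simp only [Matrix.mul_fin_two, Matrix.trace_fin_two_of] at h1 h2 h3 h4
  obtain ⟨h1l, h1r⟩ := h1
  obtain ⟨h2l, h2r⟩ := h2
  obtain ⟨h3l, h3r⟩ := h3
  obtain ⟨h4l, h4r⟩ := h4
  have hA : -1 ≤ a ∧ a ≤ 1 := by omega
  have hB : -8 ≤ b ∧ b ≤ 8 := by omega
  obtain ⟨hA1, hA2⟩ := hA
  obtain ⟨hB1, hB2⟩ := hB
  interval_cases a <;> interval_cases b <;> omega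
end

section
/- For every real α ∈ (0,1] and every integer i ≥ 0, the inequality binom(−α, i)·(−1)^i ≤ 2·binom(−α, 2i)·(−1)^{2i} holds; equivalently, α(α+1)⋯(α+i−1)/i! ≤ 2·α(α+1)⋯(α+2i−1)/(2i)! for i ≥ 1, and the case i = 0 holds since 1 ≤ 2. -/
/-- The generalized binomial coefficient `binom(α, i) = α(α-1)⋯(α-i+1)/i!` over `ℝ`. -/
noncomputable def rbinom (α : ℝ) (i : ℕ) : ℝ :=
  (∏ j ∈ Finset.range i, (α - j)) / i.factorial

/-- The rising factorial quotient `α(α+1)⋯(α+i-1)/i!`. -/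
noncomputable def rrise (α : ℝ) (i : ℕ) : ℝ :=
  (∏ j ∈ Finset.range i, (α + j)) / i.factorial

lemma rrise_succ (α : ℝ) (n : ℕ) :
    rrise α (n + 1) = rrise α n * ((α + n) / (n + 1)) := by
  simp only [rrise, Finset.prod_range_succ, Nat.factorial_succ]
  push_cast
  have h1 : ((n : ℝ) + 1) ≠ 0 := by positivity
  have h2 : ((n.factorial : ℝ)) ≠ 0 := by positivity
  rw [div_mul_div_comm]
  congr 1
  ring

lemma rrise_pos (α : ℝ) (hα : 0 < α) (n : ℕ) : 0 < rrise α n := by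
  apply div_pos
  · exact Finset.prod_pos fun j _ => by positivity
  · positivity

lemma rrise_add (α : ℝ) (i k : ℕ) :
    rrise α (i + k) = rrise α i * ∏ j ∈ Finset.Ico i (i + k), ((α + j) / (j + 1)) := by
  induction k with
  | zero => simp
  | succ k ih =>
    rw [show i + (k + 1) = (i + k) + 1 from rfl, rrise_succ, ih,
      Finset.prod_Ico_succ_top (Nat.le_add_right i k)]
    push_cast
    ring

lemma telescope (i : ℕ) (hi : 1 ≤ i) (k : ℕ) :
    ∏ j ∈ Finset.Ico i (i + k), ((j : ℝ) / (j + 1)) = i / (i + k) := by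
  induction k with
  | zero =>
    have h0 : (i : ℝ) ≠ 0 := by
      have : (0:ℝ) < (i:ℝ) := by exact_mod_cast hi
      exact this.ne'
    simp only [Nat.add_zero, Finset.Ico_self, Finset.prod_empty, Nat.cast_zero, add_zero]
    rw [div_self h0]
  | succ k ih =>
    rw [show i + (k + 1) = (i + k) + 1 from rfl,
      Finset.prod_Ico_succ_top (Nat.le_add_right i k), ih]
    have h1 : (0 : ℝ) < (i : ℝ) + k := by
      have : (0:ℝ) < (i:ℝ) := by exact_mod_cast hi
      linarith [Nat.cast_nonneg (α := ℝ) k]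
    have h0 : (i : ℝ) ≠ 0 := by
      have : (0:ℝ) < (i:ℝ) := by exact_mod_cast hi
      exact this.ne'
    push_cast
    rw [div_mul_div_comm,
      show (i : ℝ) * ((i : ℝ) + (k : ℝ)) = ((i : ℝ) + (k : ℝ)) * (i : ℝ) from by ring,
      show ((i : ℝ) + (k : ℝ)) * ((i : ℝ) + (k : ℝ) + 1)
        = ((i : ℝ) + (k : ℝ)) * ((i : ℝ) + ((k : ℝ) + 1)) from by ring,
      mul_div_mul_left _ _ h1.ne']

/-- For every real `α ∈ (0, 1]` and integer `i ≥ 0`,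
`binom(-α, i)·(-1)^i ≤ 2·binom(-α, 2i)·(-1)^{2i}`; equivalently,
`α(α+1)⋯(α+i-1)/i! ≤ 2·α(α+1)⋯(α+2i-1)/(2i)!`. -/
theorem binom_neg_le_two_mul_binom_neg (α : ℝ) (hα0 : 0 < α) (hα1 : α ≤ 1) (i : ℕ) :
    rbinom (-α) i * (-1) ^ i ≤ 2 * (rbinom (-α) (2 * i) * (-1) ^ (2 * i)) := by
  have hconv : ∀ n, rbinom (-α) n * (-1) ^ n = rrise α n := by
    intro n
    simp only [rbinom, rrise]
    rw [div_mul_eq_mul_div]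
    congr 1
    calc (∏ j ∈ Finset.range n, (-α - j)) * (-1) ^ n
        = ∏ j ∈ Finset.range n, ((-α - j) * (-1)) := by
          rw [Finset.prod_mul_distrib]; simp
      _ = _ := by apply Finset.prod_congr rfl; intros; ring
  rw [hconv, hconv]
  rcases Nat.eq_zero_or_pos i with rfl | hi
  · simp [rrise]
  rw [show 2 * i = i + i by ring, rrise_add]
  have hQ : (1 : ℝ) / 2 ≤ ∏ j ∈ Finset.Ico i (i + i), ((α + j) / (j + 1)) := by
    have h1 : ∏ j ∈ Finset.Ico i (i + i), ((j : ℝ) / (j + 1))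
        ≤ ∏ j ∈ Finset.Ico i (i + i), ((α + j) / (j + 1)) := by
      apply Finset.prod_le_prod
      · intro j _; positivity
      · intro j _; gcongr; linarith
    have h2 : ∏ j ∈ Finset.Ico i (i + i), ((j : ℝ) / (j + 1)) = 1 / 2 := by
      rw [telescope i hi i]
      have : (0:ℝ) < (i:ℝ) := by exact_mod_cast hi
      push_cast
      field_simp
      ring
    linarith
  have hA : 0 < rrise α i := rrise_pos α hα0 i
  nlinarith
end

section
/- As formal power series with real coefficients: each coefficient of (1−x^{2k})^{−1/(2k)} is nonnegative and bounded above by the corresponding coefficient of 2(1−x^k)^{−1/(2k)}, for every positive integer k. -/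
/-- The formal power series `(1 - x^k)^α` over `ℝ`, interpreted via the formal binomial
series `(1 - y)^α = ∑_{i ≥ 0} binom(α, i) (-1)^i y^i` with `y = x^k`. -/
noncomputable def oneSubXPow (α : ℝ) (k : ℕ) : PowerSeries ℝ :=
  PowerSeries.mk fun n => if k ∣ n then rbinom α (n / k) * (-1) ^ (n / k) else 0

open Finset

/-- The signed coefficient `binom(-β, m) (-1)^m = ∏_{j<m} (β+j) / m!`. -/
noncomputable def cc (β : ℝ) (m : ℕ) : ℝ := (∏ j ∈ range m, (β + j)) / m.factorial

lemma rbinom_eq (β : ℝ) (m : ℕ) :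
    (∏ j ∈ range m, (-β - j)) / m.factorial * (-1) ^ m = cc β m := by
  have h : (∏ j ∈ range m, (-β - (j:ℝ))) = (-1)^m * ∏ j ∈ range m, (β + j) := by
    simp_rw [show ∀ j:ℕ, (-β - (j:ℝ)) = (-1) * (β + j) from fun j => by ring,
      prod_mul_distrib, prod_const, card_range]
  rw [cc, h]
  field_simp
  ring_nf
  rw [mul_comm m 2, pow_mul]
  norm_num

lemma cc_nonneg {β : ℝ} (hβ : 0 ≤ β) (m : ℕ) : 0 ≤ cc β m := by
  apply div_nonneg _ (by positivity)
  exact prod_nonneg fun j _ => by positivity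

lemma fact_eq (m n : ℕ) : ((m+n).factorial : ℝ) =
    m.factorial * ∏ j ∈ range n, ((m:ℝ) + j + 1) := by
  induction n with
  | zero => simp
  | succ n ih =>
    rw [← add_assoc, Nat.factorial_succ, prod_range_succ, ← mul_assoc, ← ih]
    push_cast
    ring

lemma telescope_s10 (m : ℕ) (hm : 1 ≤ m) :
    (∏ j ∈ range m, ((m:ℝ) + j + 1)) = 2 * ∏ j ∈ range m, ((m:ℝ) + j) := by
  cases m with
  | zero => omega
  | succ s =>
    rw [prod_range_succ, prod_range_succ']
    have : (∏ j ∈ range s, (((s+1 : ℕ):ℝ) + (j:ℝ) + 1)) =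
        ∏ j ∈ range s, (((s+1 : ℕ):ℝ) + ((j:ℝ) + 1)) := prod_congr rfl fun j _ => by ring
    rw [this]
    push_cast
    ring

lemma key {β : ℝ} (hβ : 0 < β) (m : ℕ) : cc β m ≤ 2 * cc β (2 * m) := by
  rcases Nat.eq_zero_or_pos m with rfl | hm
  · simp [cc]
  · have h2m : 2 * m = m + m := by ring
    rw [cc, cc, h2m, prod_range_add, fact_eq]
    set A := ∏ j ∈ range m, (β + (j:ℝ)) with hA
    set Q := ∏ j ∈ range m, (β + ((m + j : ℕ):ℝ)) with hQ
    set R := ∏ j ∈ range m, ((m:ℝ) + j + 1) with hR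
    have hApos : 0 ≤ A := prod_nonneg fun j _ => by positivity
    have hQpos : 0 < Q := prod_pos fun j _ => by positivity
    have hRpos : 0 < R := prod_pos fun j _ => by positivity
    have hF : (0:ℝ) < m.factorial := by positivity
    have hRQ : R ≤ 2 * Q := by
      rw [hR, telescope_s10 m hm, hQ]
      have : (∏ j ∈ range m, ((m:ℝ) + j)) ≤ ∏ j ∈ range m, (β + ((m + j : ℕ):ℝ)) := by
        apply prod_le_prod (fun j _ => by positivity)
        intro j _
        push_cast
        linarith
      linarith
    rw [← mul_div_assoc, div_le_div_iff₀ hF (by positivity)]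
    calc A * (↑m.factorial * R) ≤ A * (↑m.factorial * (2 * Q)) := by gcongr
    _ = 2 * (A * Q) * ↑m.factorial := by ring

/-- For every positive integer `k`, each coefficient of the formal power series
`(1 - x^{2k})^{-1/(2k)}` is nonnegative and bounded above by the corresponding
coefficient of `2(1 - x^k)^{-1/(2k)}`. -/
theorem coeff_nonneg_and_le (k : ℕ) (hk : 1 ≤ k) (n : ℕ) :
    0 ≤ PowerSeries.coeff n (oneSubXPow (-(2 * k : ℝ)⁻¹) (2 * k)) ∧
    PowerSeries.coeff n (oneSubXPow (-(2 * k : ℝ)⁻¹) (2 * k)) ≤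
      PowerSeries.coeff n (2 * oneSubXPow (-(2 * k : ℝ)⁻¹) k) := by
  set β : ℝ := (2 * k : ℝ)⁻¹ with hβdef
  have hβ : 0 < β := by
    rw [hβdef]
    have : (0:ℝ) < k := by exact_mod_cast hk
    positivity
  have hrb : ∀ i : ℕ, rbinom (-β) i * (-1) ^ i = cc β i := by
    intro i
    rw [rbinom]
    exact rbinom_eq β i
  have hC : (2 : PowerSeries ℝ) * oneSubXPow (-β) k =
      (PowerSeries.C 2) * oneSubXPow (-β) k := by rw [map_ofNat]
  rw [hC, PowerSeries.coeff_C_mul, oneSubXPow, oneSubXPow, PowerSeries.coeff_mk,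
    PowerSeries.coeff_mk]
  by_cases hd : 2 * k ∣ n
  · obtain ⟨m, rfl⟩ := hd
    have hk0 : 0 < k := hk
    have hdk : k ∣ 2 * k * m := ⟨2 * m, by ring⟩
    have h1 : 2 * k * m / (2 * k) = m := Nat.mul_div_cancel_left m (by omega)
    have h2 : 2 * k * m / k = 2 * m := by
      rw [show 2 * k * m = k * (2 * m) by ring]
      exact Nat.mul_div_cancel_left _ hk0
    rw [if_pos ⟨m, rfl⟩, if_pos hdk, h1, h2, hrb, hrb]
    exact ⟨cc_nonneg hβ.le m, key hβ m⟩
  · rw [if_neg hd]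
    refine ⟨le_refl 0, ?_⟩
    by_cases hdk : k ∣ n
    · rw [if_pos hdk, hrb]
      have := cc_nonneg hβ.le (n / k)
      linarith
    · rw [if_neg hdk]
      simp
end

section
/- Fix w ∈ S_3 equal to the product of the braids' underlying permutations. Let β₁,…,β_k ∈ Br_3 be positive pure braids with max writhe L such that no g ∈ SL(2,ℤ) satisfies |tr(g·γ(β_i))| ≤ 2 for all i, where γ is the reduced Burau representation at t = −1. Then for any integer N ≥ L + 1, the number of tuples (w₁,…,w_N) ∈ S_3^N with w₁⋯w_N = w and |tr(γ(σ_{w₁}⋯σ_{w_N}))| > 2 is at least 6^{N−L−1}. -/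
def braidRel3 : Set (FreeGroup (Fin 2)) :=
  {FreeGroup.of 0 * FreeGroup.of 1 * FreeGroup.of 0 *
    (FreeGroup.of 1 * FreeGroup.of 0 * FreeGroup.of 1)⁻¹}

/-- The braid group on 3 strands. -/
def BraidGroup3 : Type := PresentedGroup braidRel3

noncomputable instance : Group BraidGroup3 :=
  inferInstanceAs (Group (PresentedGroup braidRel3))

def braidSigma1 : BraidGroup3 := PresentedGroup.of 0

def braidSigma2 : BraidGroup3 := PresentedGroup.of 1

lemma ofFn_get_cast {α : Type*} {n : ℕ} (ls : List α) (h : ls.length = n) :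
    List.ofFn (fun j : Fin n => ls.get (Fin.cast h.symm j)) = ls := by
  subst h
  simp [List.ofFn_getElem]

/-- Lemma 3.2 of the paper: let `γ : Br₃ → SL(2,ℤ)` be the reduced Burau representation
at `t = -1` (determined by `σ₁ ↦ [[1,1],[0,1]]`, `σ₂ ↦ [[1,0],[-1,1]]`), `π : Br₃ → S₃`
the canonical projection, `wr : Br₃ → ℤ` the writhe (sending each `σᵢ` to `1`), and
`sb : S₃ → Br₃` the simple-braid section (`sb(s₁) = σ₁`, `sb(s₂) = σ₂`, etc.).
Let `β₁, …, β_k ∈ Br₃` be positive pure braids with maximal writhe `L`, such that no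
`g ∈ SL(2,ℤ)` satisfies `|tr (g · γ(βᵢ))| ≤ 2` for all `i`. Then for any `N ≥ L + 1`
and any `w ∈ S₃`, the number of tuples `(w₁, …, w_N) ∈ S₃^N` with `w₁ ⋯ w_N = w` and
`|tr (γ(σ_{w₁} ⋯ σ_{w_N}))| > 2` is at least `6^{N - L - 1}`. -/
theorem many_tuples_with_large_trace
    (γ : BraidGroup3 →* Matrix.SpecialLinearGroup (Fin 2) ℤ)
    (hγ1 : (γ braidSigma1 : Matrix (Fin 2) (Fin 2) ℤ) = !![1, 1; 0, 1])
    (hγ2 : (γ braidSigma2 : Matrix (Fin 2) (Fin 2) ℤ) = !![1, 0; -1, 1])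
    (π : BraidGroup3 →* Equiv.Perm (Fin 3))
    (hπ1 : π braidSigma1 = Equiv.swap 0 1) (hπ2 : π braidSigma2 = Equiv.swap 1 2)
    (wr : BraidGroup3 →* Multiplicative ℤ)
    (hwr1 : wr braidSigma1 = Multiplicative.ofAdd 1)
    (hwr2 : wr braidSigma2 = Multiplicative.ofAdd 1)
    (sb : Equiv.Perm (Fin 3) → BraidGroup3)
    (hsb1 : sb 1 = 1)
    (hsbs1 : sb (Equiv.swap 0 1) = braidSigma1)
    (hsbs2 : sb (Equiv.swap 1 2) = braidSigma2)
    (hsbs12 : sb (Equiv.swap 0 1 * Equiv.swap 1 2) = braidSigma1 * braidSigma2)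
    (hsbs21 : sb (Equiv.swap 1 2 * Equiv.swap 0 1) = braidSigma2 * braidSigma1)
    (hsbs121 : sb (Equiv.swap 0 2) = braidSigma1 * braidSigma2 * braidSigma1)
    (k : ℕ) (hk : 1 ≤ k) (β : Fin k → BraidGroup3)
    (hpos : ∀ i, β i ∈ Submonoid.closure ({braidSigma1, braidSigma2} : Set BraidGroup3))
    (hpure : ∀ i, π (β i) = 1)
    (L : ℕ)
    (hLub : ∀ i, Multiplicative.toAdd (wr (β i)) ≤ (L : ℤ))
    (hLmax : ∃ i, Multiplicative.toAdd (wr (β i)) = (L : ℤ))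
    (hg : ¬ ∃ g : Matrix.SpecialLinearGroup (Fin 2) ℤ,
      ∀ i, |((g * γ (β i) : Matrix.SpecialLinearGroup (Fin 2) ℤ) :
        Matrix (Fin 2) (Fin 2) ℤ).trace| ≤ 2)
    (N : ℕ) (hN : L + 1 ≤ N) (w : Equiv.Perm (Fin 3)) :
    6 ^ (N - L - 1) ≤
      Nat.card {f : Fin N → Equiv.Perm (Fin 3) //
        (List.ofFn f).prod = w ∧
        |((γ ((List.ofFn fun j => sb (f j)).prod) :
            Matrix.SpecialLinearGroup (Fin 2) ℤ) : Matrix (Fin 2) (Fin 2) ℤ).trace| > 2} := by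
  classical
  push_neg at hg
  have hgen_wr : ∀ x ∈ ({braidSigma1, braidSigma2} : Set BraidGroup3),
      wr x = Multiplicative.ofAdd (1 : ℤ) := by
    rintro x (rfl | rfl)
    · exact hwr1
    · exact hwr2
  have hgen_sbπ : ∀ x ∈ ({braidSigma1, braidSigma2} : Set BraidGroup3),
      sb (π x) = x := by
    rintro x (rfl | rfl)
    · rw [hπ1, hsbs1]
    · rw [hπ2, hsbs2]
  choose l hlmem hlprod using fun i => Submonoid.exists_list_of_mem_closure (hpos i)
  have hwrlen : ∀ (ls : List BraidGroup3),
      (∀ x ∈ ls, x ∈ ({braidSigma1, braidSigma2} : Set BraidGroup3)) →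
      wr ls.prod = Multiplicative.ofAdd (ls.length : ℤ) := by
    intro ls
    induction ls with
    | nil => intro _; simp
    | cons a tl ih =>
        intro h
        rw [List.prod_cons, map_mul, hgen_wr a (h a List.mem_cons_self),
          ih (fun x hx => h x (List.mem_cons_of_mem a hx)), ← ofAdd_add]
        congr 1
        push_cast [List.length_cons]
        ring
  have hmL : ∀ i, (l i).length ≤ L := by
    intro i
    have h1 := hLub i
    rw [← hlprod i, hwrlen (l i) (hlmem i)] at h1
    simpa using h1
  set M := N - L - 1 with hM
  have hMN : M ≤ N := by omega
  have main : ∀ t : Fin M → Equiv.Perm (Fin 3),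
      ∃ f : Fin N → Equiv.Perm (Fin 3),
        ((List.ofFn f).prod = w ∧
         |((γ ((List.ofFn fun j => sb (f j)).prod) : Matrix.SpecialLinearGroup (Fin 2) ℤ) :
           Matrix (Fin 2) (Fin 2) ℤ).trace| > 2) ∧
        ∀ j : Fin M, f (Fin.castLE hMN j) = t j := by
    intro t
    obtain ⟨i, hi⟩ := hg (γ ((List.ofFn fun j => sb (t j)).prod * sb ((List.ofFn t).prod⁻¹ * w)))
    set u : Equiv.Perm (Fin 3) := (List.ofFn t).prod⁻¹ * w with hu
    set lw : List (Equiv.Perm (Fin 3)) :=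
      List.ofFn t ++ [u] ++ List.replicate (L - (l i).length) 1 ++ (l i).map π with hlw
    have hlen : lw.length = N := by
      have := hmL i
      simp only [hlw, List.length_append, List.length_ofFn, List.length_cons,
        List.length_nil, List.length_replicate, List.length_map]
      omega
    have hofn : List.ofFn (fun j : Fin N => lw.get (Fin.cast hlen.symm j)) = lw :=
      ofFn_get_cast lw hlen
    have hmapid : (l i).map (fun x => sb (π x)) = l i := by
      conv_rhs => rw [← List.map_id (l i)]
      exact List.map_congr_left (fun x hx => hgen_sbπ x (hlmem i x hx))
    refine ⟨fun j => lw.get (Fin.cast hlen.symm j), ⟨?_, ?_⟩, ?_⟩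
    · rw [hofn, hlw]
      simp only [List.prod_append, List.prod_cons, List.prod_nil, List.prod_replicate,
        one_pow, mul_one]
      rw [← map_list_prod π, hlprod, hpure i, hu]
      group
    · have hmap : (List.ofFn fun j : Fin N => sb (lw.get (Fin.cast hlen.symm j)))
          = lw.map sb := by
        rw [show (fun j : Fin N => sb (lw.get (Fin.cast hlen.symm j)))
            = sb ∘ (fun j : Fin N => lw.get (Fin.cast hlen.symm j)) from rfl,
          ← List.map_ofFn, hofn]
      rw [hmap, hlw]
      simp only [List.map_append, List.map_replicate, hsb1, List.map_map, List.map_ofFn]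
      rw [show ((fun x => sb (π x)) : BraidGroup3 → BraidGroup3) = sb ∘ π from rfl] at hmapid
      rw [hmapid]
      simp only [List.prod_append, List.prod_cons, List.prod_nil, List.prod_replicate,
        one_pow, mul_one, List.map_cons, List.map_nil]
      rw [hlprod i, map_mul]
      exact hi
    · intro j
      have hj1 : (j : ℕ) < (List.ofFn t).length := by simpa using j.isLt
      have hj2 : (j : ℕ) < (List.ofFn t ++ [u]).length := by
        simp only [List.length_append]; omega
      have hj3 : (j : ℕ) < (List.ofFn t ++ [u] ++ List.replicate (L - (l i).length) 1).length := by
        simp only [List.length_append]; omega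
      show lw.get (Fin.cast hlen.symm (Fin.castLE hMN j)) = t j
      rw [List.get_eq_getElem]
      simp only [Fin.coe_cast, Fin.coe_castLE, hlw]
      rw [List.getElem_append_left hj3, List.getElem_append_left hj2,
        List.getElem_append_left hj1, List.getElem_ofFn]
  choose F hFmem hFkey using main
  have hinj : Function.Injective (fun t : Fin M → Equiv.Perm (Fin 3) =>
      (⟨F t, hFmem t⟩ : {f : Fin N → Equiv.Perm (Fin 3) //
        (List.ofFn f).prod = w ∧
        |((γ ((List.ofFn fun j => sb (f j)).prod) :
            Matrix.SpecialLinearGroup (Fin 2) ℤ) : Matrix (Fin 2) (Fin 2) ℤ).trace| > 2})) := by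
    intro t1 t2 h
    funext j
    have h' : F t1 = F t2 := congrArg Subtype.val h
    rw [← hFkey t1 j, ← hFkey t2 j, h']
  refine le_trans (le_of_eq ?_) (Nat.card_le_card_of_injective _ hinj)
  rw [Nat.card_eq_fintype_card, Fintype.card_fun]
  have h6 : Fintype.card (Equiv.Perm (Fin 3)) = 6 := by
    rw [Fintype.card_perm]
    decide
  simp [h6, hM]
end

section
/- Let c be a 3N-cycle in S_{3N} with orbit sequence a_0 = 1, a_{i+1} = c(a_i). Define p_i(c) ∈ S_3 (for i = 1,…,N) as the composite of: the order-preserving bijection {1,2,3} → {a_{i−1}, a_{i−1+N}, a_{i−1+2N}}, the map a_k ↦ a_{k+1}, and the order-preserving bijection {a_i, a_{i+N}, a_{i+2N}} → {1,2,3}. Then the product p_1(c)p_2(c)⋯p_N(c) is a 3-cycle in S_3; specifically it sends 1 ↦ 2 if a_N < a_{2N} and 1 ↦ 3 if a_{2N} < a_N. -/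
/-- The orbit sequence of `1` (encoded as `0 : Fin (3N)`) under a permutation `c`:
`a i = cⁱ(1)`. -/
def orb (N : ℕ) (h : 0 < 3 * N) (c : Equiv.Perm (Fin (3 * N))) (i : ℕ) : Fin (3 * N) :=
  (c ^ i) ⟨0, h⟩

/-- The 3-element set `{a_i, a_{i+N}, a_{i+2N}}`. -/
def tripleSet (N : ℕ) (h : 0 < 3 * N) (c : Equiv.Perm (Fin (3 * N))) (i : ℕ) :
    Finset (Fin (3 * N)) :=
  {orb N h c i, orb N h c (i + N), orb N h c (i + 2 * N)}

/-- The `t`-th smallest element of a finset of `Fin (3N)` (`t` is 0-based). -/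
def nthSmallest (N : ℕ) (h : 0 < 3 * N) (s : Finset (Fin (3 * N))) (t : ℕ) : Fin (3 * N) :=
  (s.sort (· ≤ ·)).getD t ⟨0, h⟩

theorem fin3_cases (v : Fin 3) : v = 0 ∨ v = 1 ∨ v = 2 := by
  fin_cases v <;> simp

theorem sort_triple_of_lt {α : Type*} [LinearOrder α] [DecidableEq α] {x y z : α}
    (h1 : x < y) (h2 : y < z) :
    ({x, y, z} : Finset α).sort (· ≤ ·) = [x, y, z] := by
  refine (fun hp hs => List.Perm.eq_of_pairwise' (Finset.pairwise_sort _ _) hs hp) ?_ ?_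
  · rw [List.perm_ext_iff_of_nodup (Finset.sort_nodup _ _)
      (by simp [h1.ne, h2.ne, (h1.trans h2).ne])]
    intro a
    simp [Finset.mem_sort]
  · simp [List.pairwise_cons, h1.le, h2.le, (h1.trans h2).le]

/-- Let `c` be a `3N`-cycle in `S_{3N}` with orbit sequence `a_0 = 1`, `a_{i+1} = c(a_i)`,
and for `i = 1, …, N` let `p_i ∈ S₃` be the composite of the order-preserving bijection
`{1,2,3} → {a_{i-1}, a_{i-1+N}, a_{i-1+2N}}`, the map `a_k ↦ a_{k+1}`, and the
order-preserving bijection `{a_i, a_{i+N}, a_{i+2N}} → {1,2,3}` (so that `p_i` is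
characterized by: the image under `c` of the `t`-th smallest element of the first set is
the `p_i(t)`-th smallest element of the second set). Then the product `p_1 p_2 ⋯ p_N`
(composed so that `p_1` acts first) is a 3-cycle; it sends `1 ↦ 2` if `a_N < a_{2N}` and
`1 ↦ 3` if `a_{2N} < a_N` (with `{1,2,3}` encoded as `Fin 3 = {0,1,2}`). -/
theorem product_of_induced_permutations_is_three_cycle
    (N : ℕ) (hN : 0 < 3 * N) (c : Equiv.Perm (Fin (3 * N)))
    (hc : c.IsCycle) (hsupp : c.support.card = 3 * N)
    (p : ℕ → Equiv.Perm (Fin 3))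
    (hp : ∀ i, 1 ≤ i → i ≤ N → ∀ t : Fin 3,
      nthSmallest N hN (tripleSet N hN c i) ((p i t) : Fin 3).val =
        c (nthSmallest N hN (tripleSet N hN c (i - 1)) t.val)) :
    (((List.ofFn fun j : Fin N => p (j.val + 1)).reverse).prod).IsThreeCycle ∧
    (orb N hN c N < orb N hN c (2 * N) →
      ((List.ofFn fun j : Fin N => p (j.val + 1)).reverse).prod =
        Equiv.swap 0 1 * Equiv.swap 1 2) ∧
    (orb N hN c (2 * N) < orb N hN c N →
      ((List.ofFn fun j : Fin N => p (j.val + 1)).reverse).prod =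
        Equiv.swap 1 2 * Equiv.swap 0 1) := by
  have hNpos : 0 < N := by omega
  have horder : orderOf c = 3 * N := by rw [hc.orderOf, hsupp]
  have hpow3N : c ^ (3 * N) = 1 := by
    have h1 : c ^ (3 * N) = c ^ orderOf c := by rw [horder]
    rw [h1, pow_orderOf_eq_one]
  have hsuppuniv : c.support = Finset.univ :=
    Finset.eq_univ_of_card _ (by rw [hsupp, Fintype.card_fin])
  have hcycOn : c.IsCycleOn ((Finset.univ : Finset (Fin (3 * N))) : Set (Fin (3 * N))) := by
    have hset : {x : Fin (3 * N) | c x ≠ x}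
        = ((Finset.univ : Finset (Fin (3 * N))) : Set (Fin (3 * N))) := by
      ext x
      simp [← Equiv.Perm.mem_support, hsuppuniv]
    rw [← hset]
    exact hc.isCycleOn
  have hfix : ∀ n : ℕ, (c ^ n) ⟨0, hN⟩ = ⟨0, hN⟩ ↔ 3 * N ∣ n := by
    intro n
    have := hcycOn.pow_apply_eq (a := ⟨0, hN⟩) (Finset.mem_univ _) (n := n)
    rwa [Finset.card_univ, Fintype.card_fin] at this
  have hne1 : orb N hN c N ≠ ⟨0, hN⟩ := by
    intro h
    have h2 := (hfix N).1 h
    have := Nat.le_of_dvd hNpos h2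
    omega
  have hne2 : orb N hN c (2 * N) ≠ ⟨0, hN⟩ := by
    intro h
    have h2 := (hfix (2 * N)).1 h
    have := Nat.le_of_dvd (by omega) h2
    omega
  have hne3 : orb N hN c N ≠ orb N hN c (2 * N) := by
    intro h
    apply hne1
    simp only [orb] at h ⊢
    rw [show 2 * N = N + N by ring, pow_add, Equiv.Perm.mul_apply] at h
    exact ((c ^ N).injective h).symm
  -- the key induction
  have key : ∀ k, k ≤ N → ∀ t : Fin 3,
      nthSmallest N hN (tripleSet N hN c k)
          ((((List.ofFn fun j : Fin k => p (j.val + 1)).reverse).prod t).val)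
        = (c ^ k) (nthSmallest N hN (tripleSet N hN c 0) t.val) := by
    intro k
    induction k with
    | zero => intro _ t; simp
    | succ k ih =>
      intro hk t
      have hk' : k ≤ N := Nat.le_of_succ_le hk
      have hsplit : ((List.ofFn fun j : Fin (k + 1) => p (j.val + 1)).reverse).prod
          = p (k + 1) * ((List.ofFn fun j : Fin k => p (j.val + 1)).reverse).prod := by
        rw [List.ofFn_succ']
        simp [List.reverse_concat]
      rw [hsplit, Equiv.Perm.mul_apply]
      have h1 := hp (k + 1) (by omega) hk
        (((List.ofFn fun j : Fin k => p (j.val + 1)).reverse).prod t)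
      simp only [Nat.add_sub_cancel] at h1
      rw [h1, ih hk' t, ← Equiv.Perm.mul_apply, ← pow_succ']
  have hTN : tripleSet N hN c N = tripleSet N hN c 0 := by
    unfold tripleSet
    have e1 : orb N hN c (N + 2 * N) = orb N hN c 0 := by
      simp only [orb]
      rw [show N + 2 * N = 3 * N by ring, hpow3N]
      simp
    rw [e1]
    simp only [show N + N = 2 * N by ring, show 0 + N = N by ring,
      show 0 + 2 * N = 2 * N by ring]
    ext a
    simp only [Finset.mem_insert, Finset.mem_singleton]
    tauto
  set P := ((List.ofFn fun j : Fin N => p (j.val + 1)).reverse).prod with hPdef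
  have hkeyN := key N le_rfl
  rw [hTN] at hkeyN
  have horb0 : orb N hN c 0 = ⟨0, hN⟩ := by simp [orb]
  have hT0 : tripleSet N hN c 0 = {⟨0, hN⟩, orb N hN c N, orb N hN c (2 * N)} := by
    simp only [tripleSet, zero_add, horb0]
  have hx0le : ∀ x : Fin (3 * N), (⟨0, hN⟩ : Fin (3 * N)) ≤ x := by
    intro x
    simp [Fin.le_def]
  have hcN0 : (c ^ N) (⟨0, hN⟩ : Fin (3 * N)) = orb N hN c N := rfl
  have hcN1 : (c ^ N) (orb N hN c N) = orb N hN c (2 * N) := by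
    simp only [orb]
    rw [← Equiv.Perm.mul_apply, ← pow_add, show N + N = 2 * N by ring]
  have hcN2 : (c ^ N) (orb N hN c (2 * N)) = ⟨0, hN⟩ := by
    simp only [orb]
    rw [← Equiv.Perm.mul_apply, ← pow_add, show N + 2 * N = 3 * N by ring, hpow3N]
    simp
  rcases hne3.lt_or_gt with h | h
  · -- a_N < a_{2N}
    have hsort : (tripleSet N hN c 0).sort (· ≤ ·)
        = [⟨0, hN⟩, orb N hN c N, orb N hN c (2 * N)] := by
      rw [hT0, sort_triple_of_lt (lt_of_le_of_ne (hx0le _) (Ne.symm hne1)) h]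
    have hval : ∀ t : Fin 3,
        ([(⟨0, hN⟩ : Fin (3 * N)), orb N hN c N, orb N hN c (2 * N)].getD (P t).val ⟨0, hN⟩)
          = (c ^ N) (nthSmallest N hN (tripleSet N hN c 0) t.val) := by
      intro t
      rw [← hsort]
      exact hkeyN t
    have hP0 : P 0 = 1 := by
      have h0 := hval 0
      rw [show ((0 : Fin 3) : ℕ) = 0 from rfl] at h0
      rw [nthSmallest, hsort] at h0
      simp only [List.getD_cons_zero, hcN0] at h0
      rcases fin3_cases (P 0) with hv | hv | hv
      · rw [hv] at h0; simp at h0; (first | exact absurd h0 hne1 | exact absurd h0.symm hne1 | exact absurd h0 hne2 | exact absurd h0.symm hne2 | exact absurd h0 hne3 | exact absurd h0.symm hne3 | exact absurd h0 (Ne.symm hne3) | exact absurd h0.symm (Ne.symm hne3))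
      · exact hv
      · rw [hv] at h0; simp at h0; (first | exact absurd h0 hne1 | exact absurd h0.symm hne1 | exact absurd h0 hne2 | exact absurd h0.symm hne2 | exact absurd h0 hne3 | exact absurd h0.symm hne3 | exact absurd h0 (Ne.symm hne3) | exact absurd h0.symm (Ne.symm hne3))
    have hP1 : P 1 = 2 := by
      have h0 := hval 1
      rw [show ((1 : Fin 3) : ℕ) = 1 from rfl] at h0
      rw [nthSmallest, hsort] at h0
      simp only [List.getD_cons_succ, List.getD_cons_zero, hcN1] at h0
      rcases fin3_cases (P 1) with hv | hv | hv
      · rw [hv] at h0; simp at h0; (first | exact absurd h0 hne1 | exact absurd h0.symm hne1 | exact absurd h0 hne2 | exact absurd h0.symm hne2 | exact absurd h0 hne3 | exact absurd h0.symm hne3 | exact absurd h0 (Ne.symm hne3) | exact absurd h0.symm (Ne.symm hne3))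
      · rw [hv] at h0; simp at h0; (first | exact absurd h0 hne1 | exact absurd h0.symm hne1 | exact absurd h0 hne2 | exact absurd h0.symm hne2 | exact absurd h0 hne3 | exact absurd h0.symm hne3 | exact absurd h0 (Ne.symm hne3) | exact absurd h0.symm (Ne.symm hne3))
      · exact hv
    have hP2 : P 2 = 0 := by
      have h0 := hval 2
      rw [show ((2 : Fin 3) : ℕ) = 2 from rfl] at h0
      rw [nthSmallest, hsort] at h0
      simp only [List.getD_cons_succ, List.getD_cons_zero, hcN2] at h0
      rcases fin3_cases (P 2) with hv | hv | hv
      · exact hv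
      · rw [hv] at h0; simp at h0; (first | exact absurd h0 hne1 | exact absurd h0.symm hne1 | exact absurd h0 hne2 | exact absurd h0.symm hne2 | exact absurd h0 hne3 | exact absurd h0.symm hne3 | exact absurd h0 (Ne.symm hne3) | exact absurd h0.symm (Ne.symm hne3))
      · rw [hv] at h0; simp at h0; (first | exact absurd h0 hne1 | exact absurd h0.symm hne1 | exact absurd h0 hne2 | exact absurd h0.symm hne2 | exact absurd h0 hne3 | exact absurd h0.symm hne3 | exact absurd h0 (Ne.symm hne3) | exact absurd h0.symm (Ne.symm hne3))
    have hPeq : P = Equiv.swap 0 1 * Equiv.swap 1 2 := by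
      apply Equiv.ext
      intro t
      rcases fin3_cases t with rfl | rfl | rfl
      · rw [hP0]; decide
      · rw [hP1]; decide
      · rw [hP2]; decide
    refine ⟨?_, fun _ => hPeq, fun h' => absurd h' (not_lt.2 h.le)⟩
    rw [hPeq]
    have h3 := Equiv.Perm.isThreeCycle_swap_mul_swap_same
      (a := (1 : Fin 3)) (b := 0) (c := 2) (by decide) (by decide) (by decide)
    rwa [Equiv.swap_comm 1 0] at h3
  · -- a_{2N} < a_N
    have hsort : (tripleSet N hN c 0).sort (· ≤ ·)
        = [⟨0, hN⟩, orb N hN c (2 * N), orb N hN c N] := by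
      have hT0' : tripleSet N hN c 0 = {⟨0, hN⟩, orb N hN c (2 * N), orb N hN c N} := by
        rw [hT0]
        ext a
        simp only [Finset.mem_insert, Finset.mem_singleton]
        tauto
      rw [hT0', sort_triple_of_lt (lt_of_le_of_ne (hx0le _) (Ne.symm hne2)) h]
    have hval : ∀ t : Fin 3,
        ([(⟨0, hN⟩ : Fin (3 * N)), orb N hN c (2 * N), orb N hN c N].getD (P t).val ⟨0, hN⟩)
          = (c ^ N) (nthSmallest N hN (tripleSet N hN c 0) t.val) := by
      intro t
      rw [← hsort]
      exact hkeyN t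
    have hP0 : P 0 = 2 := by
      have h0 := hval 0
      rw [show ((0 : Fin 3) : ℕ) = 0 from rfl] at h0
      rw [nthSmallest, hsort] at h0
      simp only [List.getD_cons_zero, hcN0] at h0
      rcases fin3_cases (P 0) with hv | hv | hv
      · rw [hv] at h0; simp at h0; (first | exact absurd h0 hne1 | exact absurd h0.symm hne1 | exact absurd h0 hne2 | exact absurd h0.symm hne2 | exact absurd h0 hne3 | exact absurd h0.symm hne3 | exact absurd h0 (Ne.symm hne3) | exact absurd h0.symm (Ne.symm hne3))
      · rw [hv] at h0; simp at h0; (first | exact absurd h0 hne1 | exact absurd h0.symm hne1 | exact absurd h0 hne2 | exact absurd h0.symm hne2 | exact absurd h0 hne3 | exact absurd h0.symm hne3 | exact absurd h0 (Ne.symm hne3) | exact absurd h0.symm (Ne.symm hne3))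
      · exact hv
    have hP1 : P 1 = 0 := by
      have h0 := hval 1
      rw [show ((1 : Fin 3) : ℕ) = 1 from rfl] at h0
      rw [nthSmallest, hsort] at h0
      simp only [List.getD_cons_succ, List.getD_cons_zero, hcN2] at h0
      rcases fin3_cases (P 1) with hv | hv | hv
      · exact hv
      · rw [hv] at h0; simp at h0; (first | exact absurd h0 hne1 | exact absurd h0.symm hne1 | exact absurd h0 hne2 | exact absurd h0.symm hne2 | exact absurd h0 hne3 | exact absurd h0.symm hne3 | exact absurd h0 (Ne.symm hne3) | exact absurd h0.symm (Ne.symm hne3))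
      · rw [hv] at h0; simp at h0; (first | exact absurd h0 hne1 | exact absurd h0.symm hne1 | exact absurd h0 hne2 | exact absurd h0.symm hne2 | exact absurd h0 hne3 | exact absurd h0.symm hne3 | exact absurd h0 (Ne.symm hne3) | exact absurd h0.symm (Ne.symm hne3))
    have hP2 : P 2 = 1 := by
      have h0 := hval 2
      rw [show ((2 : Fin 3) : ℕ) = 2 from rfl] at h0
      rw [nthSmallest, hsort] at h0
      simp only [List.getD_cons_succ, List.getD_cons_zero, hcN1] at h0
      rcases fin3_cases (P 2) with hv | hv | hv
      · rw [hv] at h0; simp at h0; (first | exact absurd h0 hne1 | exact absurd h0.symm hne1 | exact absurd h0 hne2 | exact absurd h0.symm hne2 | exact absurd h0 hne3 | exact absurd h0.symm hne3 | exact absurd h0 (Ne.symm hne3) | exact absurd h0.symm (Ne.symm hne3))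
      · exact hv
      · rw [hv] at h0; simp at h0; (first | exact absurd h0 hne1 | exact absurd h0.symm hne1 | exact absurd h0 hne2 | exact absurd h0.symm hne2 | exact absurd h0 hne3 | exact absurd h0.symm hne3 | exact absurd h0 (Ne.symm hne3) | exact absurd h0.symm (Ne.symm hne3))
    have hPeq : P = Equiv.swap 1 2 * Equiv.swap 0 1 := by
      apply Equiv.ext
      intro t
      rcases fin3_cases t with rfl | rfl | rfl
      · rw [hP0]; decide
      · rw [hP1]; decide
      · rw [hP2]; decide
    refine ⟨?_, fun h' => absurd h' (not_lt.2 h.le), fun _ => hPeq⟩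
    rw [hPeq]
    have h3 := Equiv.Perm.isThreeCycle_swap_mul_swap_same
      (a := (1 : Fin 3)) (b := 2) (c := 0) (by decide) (by decide) (by decide)
    rwa [Equiv.swap_comm 1 0] at h3
end

section
/- With the map c ↦ (p₁(c),…,p_N(c)) from 3N-cycles in S_{3N} to N-tuples in S_3^N whose product is a 3-cycle (as defined via the orbit of 1 and order-preserving relabelings): every fiber of this map has cardinality (3N−1)!/(2·6^{N−1}); i.e., the fibers are equinumerous over the 2·6^{N−1} possible targets. -/
set_option linter.unusedSectionVars false
set_option linter.unusedVariables false
set_option maxHeartbeats 1000000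


/-- `c ↦ p(c)`: the 3N-cycle `c` maps to the tuple `(p₁(c), …, p_N(c)) ∈ S₃^N`, where
`p_i(c)` is characterized by: the image under `c` of the `t`-th smallest element of
`{a_{i-1}, a_{i-1+N}, a_{i-1+2N}}` is the `p_i(c)(t)`-th smallest element of
`{a_i, a_{i+N}, a_{i+2N}}`. -/
def inducedTuple (N : ℕ) (h : 0 < 3 * N) (c : Equiv.Perm (Fin (3 * N)))
    (v : Fin N → Equiv.Perm (Fin 3)) : Prop :=
  ∀ j : Fin N, ∀ t : Fin 3,
    nthSmallest N h (tripleSet N h c (j.val + 1)) ((v j t) : Fin 3).val =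
      c (nthSmallest N h (tripleSet N h c j.val) t.val)

namespace FibEq

/-- rank of `x` in `s` (index in the sorted list). -/
def rnk (N : ℕ) (s : Finset (Fin (3 * N))) (x : Fin (3 * N)) : ℕ :=
  (s.sort (· ≤ ·)).idxOf x

section basic

set_option linter.unusedSectionVars false

variable {N : ℕ} (hN : 0 < 3 * N) (c : Equiv.Perm (Fin (3 * N)))

lemma hNpos (hN : 0 < 3 * N) : 0 < N := by omega

lemma orb_succ (k : ℕ) : orb N hN c (k + 1) = c (orb N hN c k) := by
  simp [orb, pow_succ', Equiv.Perm.mul_apply]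

variable {c} (hc : c.IsCycle) (hs : c.support.card = 3 * N)

include hc hs

lemma support_eq : c.support = Finset.univ :=
  Finset.eq_univ_of_card _ (by simp [hs])

lemma isCycleOn : c.IsCycleOn (c.support : Set (Fin (3 * N))) := by
  have := hc.isCycleOn
  rwa [Equiv.Perm.coe_support_eq_set_support]

lemma orb_eq_orb_iff {i j : ℕ} : orb N hN c i = orb N hN c j ↔ i ≡ j [MOD 3 * N] := by
  have h0 : (⟨0, hN⟩ : Fin (3 * N)) ∈ c.support := by
    rw [support_eq hc hs]; exact Finset.mem_univ _
  have := (isCycleOn hc hs).pow_apply_eq_pow_apply h0 (m := i) (n := j)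
  rw [hs] at this
  simpa [orb] using this


lemma orb_zero : orb N hN c 0 = ⟨0, hN⟩ := by simp [orb]

omit hc hs in
lemma orb_add (k m : ℕ) : orb N hN c (k + m) = (c ^ m) (orb N hN c k) := by
  rw [orb, orb, add_comm, pow_add, Equiv.Perm.mul_apply]

lemma orb_eq_orb {i j : ℕ} (hi : i < 3 * N) (hj : j < 3 * N)
    (h : orb N hN c i = orb N hN c j) : i = j := by
  have := (orb_eq_orb_iff hN hc hs).1 h
  have : i % (3 * N) = j % (3 * N) := this
  rwa [Nat.mod_eq_of_lt hi, Nat.mod_eq_of_lt hj] at this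

lemma orb_add_period (k : ℕ) : orb N hN c (k + 3 * N) = orb N hN c k :=
  (orb_eq_orb_iff hN hc hs).2 (by simp [Nat.ModEq, Nat.add_mod])

lemma orb_fin_bijective : Function.Bijective (fun k : Fin (3 * N) => orb N hN c k.val) := by
  rw [Fintype.bijective_iff_injective_and_card]
  refine ⟨fun i j h => Fin.ext (orb_eq_orb hN hc hs i.isLt j.isLt h), rfl⟩

lemma orb_surj (x : Fin (3 * N)) : ∃ k < 3 * N, orb N hN c k = x := by
  obtain ⟨k, hk⟩ := (orb_fin_bijective hN hc hs).2 x
  exact ⟨k.val, k.isLt, hk⟩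

omit hc hs in
lemma mem_tripleSet_iff {x : Fin (3 * N)} {i : ℕ} :
    x ∈ tripleSet N hN c i ↔
      x = orb N hN c i ∨ x = orb N hN c (i + N) ∨ x = orb N hN c (i + 2 * N) := by
  simp [tripleSet]

lemma tripleSet_add_N (i : ℕ) : tripleSet N hN c (i + N) = tripleSet N hN c i := by
  have h3 : orb N hN c (i + N + 2 * N) = orb N hN c i := by
    have : i + N + 2 * N = i + 3 * N := by ring
    rw [this, orb_add_period hN hc hs]
  ext x
  simp only [mem_tripleSet_iff]
  have : i + N + N = i + 2 * N := by ring
  rw [this, h3]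
  tauto

lemma tripleSet_add_mul_N (i m : ℕ) : tripleSet N hN c (i + m * N) = tripleSet N hN c i := by
  induction m with
  | zero => simp
  | succ m ih =>
    have : i + (m + 1) * N = i + m * N + N := by ring
    rw [this, tripleSet_add_N hN hc hs, ih]

lemma tripleSet_mod (i : ℕ) : tripleSet N hN c i = tripleSet N hN c (i % N) := by
  conv_lhs => rw [← Nat.mod_add_div' i N]
  exact tripleSet_add_mul_N hN hc hs _ _

lemma orb_trip_inj {i i' t t' : ℕ} (hi : i < N) (hi' : i' < N) (ht : t < 3) (ht' : t' < 3)
    (h : orb N hN c (i + t * N) = orb N hN c (i' + t' * N)) : i = i' ∧ t = t' := by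
  have := orb_eq_orb hN hc hs (by nlinarith) (by nlinarith) h
  constructor <;> (interval_cases t <;> interval_cases t' <;> omega)

lemma card_tripleSet (i : ℕ) : (tripleSet N hN c i).card = 3 := by
  have hmod : i % N < N := Nat.mod_lt _ (hNpos hN)
  rw [tripleSet_mod hN hc hs]
  set j := i % N
  have h01 : orb N hN c j ≠ orb N hN c (j + N) := by
    intro h
    have := orb_trip_inj hN hc hs hmod hmod (by omega) (by omega)
      (by simpa using h : orb N hN c (j + 0 * N) = orb N hN c (j + 1 * N))
    omega
  have h02 : orb N hN c j ≠ orb N hN c (j + 2 * N) := by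
    intro h
    have := orb_trip_inj hN hc hs hmod hmod (by omega) (by omega)
      (by simpa using h : orb N hN c (j + 0 * N) = orb N hN c (j + 2 * N))
    omega
  have h12 : orb N hN c (j + N) ≠ orb N hN c (j + 2 * N) := by
    intro h
    have := orb_trip_inj hN hc hs hmod hmod (by omega) (by omega)
      (by simpa using h : orb N hN c (j + 1 * N) = orb N hN c (j + 2 * N))
    omega
  rw [tripleSet]
  rw [Finset.card_insert_of_notMem (by simp [h01, h02]),
    Finset.card_insert_of_notMem (by simp [h12]), Finset.card_singleton]

omit hc hs in
lemma orb_mem_tripleSet (i : ℕ) : orb N hN c i ∈ tripleSet N hN c i := by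
  simp [tripleSet]

end basic

section sort3

variable {N : ℕ} (hN : 0 < 3 * N) {s : Finset (Fin (3 * N))} (h3 : s.card = 3)

include hN h3

lemma length_sort3 : (s.sort (· ≤ ·)).length = 3 := by
  rw [Finset.length_sort, h3]

lemma nthSmallest_eq_getElem {t : ℕ} (ht : t < 3) :
    nthSmallest N hN s t = (s.sort (· ≤ ·))[t]'(by rw [length_sort3 hN h3]; exact ht) := by
  rw [nthSmallest, List.getD_eq_getElem]

lemma nthSmallest_mem {t : ℕ} (ht : t < 3) : nthSmallest N hN s t ∈ s := by
  rw [nthSmallest_eq_getElem hN h3 ht, ← Finset.mem_sort (· ≤ ·)]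
  exact List.getElem_mem _

omit hN in
lemma rnk_lt {x : Fin (3 * N)} (hx : x ∈ s) : rnk N s x < 3 := by
  have h := List.idxOf_lt_length_iff.2 ((Finset.mem_sort (· ≤ ·)).2 hx)
  simpa [rnk, Finset.length_sort, h3] using h

lemma nthSmallest_rnk {x : Fin (3 * N)} (hx : x ∈ s) : nthSmallest N hN s (rnk N s x) = x := by
  rw [nthSmallest_eq_getElem hN h3 (rnk_lt h3 hx)]
  exact List.getElem_idxOf _

lemma rnk_nthSmallest {t : ℕ} (ht : t < 3) : rnk N s (nthSmallest N hN s t) = t := by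
  rw [nthSmallest_eq_getElem hN h3 ht]
  exact List.Nodup.idxOf_getElem (s.sort_nodup (· ≤ ·)) _ _

lemma nthSmallest_inj {t t' : ℕ} (ht : t < 3) (ht' : t' < 3)
    (h : nthSmallest N hN s t = nthSmallest N hN s t') : t = t' := by
  rw [← rnk_nthSmallest hN h3 ht, ← rnk_nthSmallest hN h3 ht', h]

lemma rnk_inj {x y : Fin (3 * N)} (hx : x ∈ s) (hy : y ∈ s)
    (h : rnk N s x = rnk N s y) : x = y := by
  rw [← nthSmallest_rnk hN h3 hx, ← nthSmallest_rnk hN h3 hy, h]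

lemma nthSmallest_zero (hz : (⟨0, hN⟩ : Fin (3 * N)) ∈ s) :
    nthSmallest N hN s 0 = ⟨0, hN⟩ := by
  have hlen : 0 < (s.sort (· ≤ ·)).length := by rw [length_sort3 hN h3]; omega
  have hmin : (s.sort (· ≤ ·)).get ⟨0, hlen⟩ = s.min' ⟨_, hz⟩ := Finset.sorted_zero_eq_min'
  have : s.min' ⟨_, hz⟩ = ⟨0, hN⟩ := by
    refine le_antisymm (Finset.min'_le _ _ hz) ?_
    exact Fin.mk_le_mk.2 (Nat.zero_le _)
  rw [nthSmallest_eq_getElem hN h3 (by omega)]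
  calc (s.sort (· ≤ ·))[0]'(by rw [length_sort3 hN h3]; omega)
      = (s.sort (· ≤ ·)).get ⟨0, hlen⟩ := rfl
    _ = s.min' ⟨_, hz⟩ := hmin
    _ = ⟨0, hN⟩ := this

lemma rnk_zero (hz : (⟨0, hN⟩ : Fin (3 * N)) ∈ s) : rnk N s ⟨0, hN⟩ = 0 := by
  conv_lhs => rw [← nthSmallest_zero hN h3 hz]
  exact rnk_nthSmallest hN h3 (by omega)

end sort3

section tuple

variable {N : ℕ} (hN : 0 < 3 * N) (c : Equiv.Perm (Fin (3 * N)))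
  (hc : c.IsCycle) (hs : c.support.card = 3 * N)

/-- rank sequence of the orbit -/
def rho (k : ℕ) : ℕ := rnk N (tripleSet N hN c (k % N)) (orb N hN c k)

omit hc hs in
lemma orb_mem_tripleSet_mod (hc : c.IsCycle) (hs : c.support.card = 3 * N) (k : ℕ) :
    orb N hN c k ∈ tripleSet N hN c (k % N) := by
  rw [← tripleSet_mod hN hc hs]
  exact orb_mem_tripleSet hN k

include hc hs

lemma rho_lt (k : ℕ) : rho hN c k < 3 :=
  rnk_lt (card_tripleSet hN hc hs _) (orb_mem_tripleSet_mod hN c hc hs k)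

/-- `rho` as `Fin 3` -/
def rhoF (k : ℕ) : Fin 3 := ⟨rho hN c k, rho_lt hN c hc hs k⟩

omit hc hs in
lemma c_maps_tripleSet {x : Fin (3 * N)} {j : ℕ} (hx : x ∈ tripleSet N hN c j) :
    c x ∈ tripleSet N hN c (j + 1) := by
  rw [mem_tripleSet_iff] at hx ⊢
  rcases hx with h | h | h <;> rw [h, ← orb_succ]
  · left; rfl
  · right; left; congr 1; ring
  · right; right; congr 1; ring

def tupleFun (j t : ℕ) : ℕ :=
  rnk N (tripleSet N hN c (j + 1)) (c (nthSmallest N hN (tripleSet N hN c j) t))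

lemma tupleFun_lt {j t : ℕ} (ht : t < 3) : tupleFun hN c j t < 3 :=
  rnk_lt (card_tripleSet hN hc hs _)
    (c_maps_tripleSet hN c (nthSmallest_mem hN (card_tripleSet hN hc hs _) ht))

/-- the induced tuple of a full cycle -/
noncomputable def tupleOf (j : Fin N) : Equiv.Perm (Fin 3) :=
  Equiv.ofBijective (fun t : Fin 3 => ⟨tupleFun hN c j.val t.val, tupleFun_lt hN c hc hs t.isLt⟩)
    (Finite.injective_iff_bijective.1 (by
      intro t t' h
      have h' : tupleFun hN c j.val t.val = tupleFun hN c j.val t'.val := congrArg Fin.val h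
      have hm := nthSmallest_mem hN (card_tripleSet hN hc hs j.val) t.isLt
      have hm' := nthSmallest_mem hN (card_tripleSet hN hc hs j.val) t'.isLt
      have := rnk_inj hN (card_tripleSet hN hc hs (j.val + 1))
        (c_maps_tripleSet hN c hm) (c_maps_tripleSet hN c hm') h'
      exact Fin.ext (nthSmallest_inj hN (card_tripleSet hN hc hs j.val) t.isLt t'.isLt
        (c.injective this))))

lemma tupleOf_apply (j : Fin N) (t : Fin 3) :
    (tupleOf hN c hc hs j t : ℕ) = tupleFun hN c j.val t.val := rfl

lemma inducedTuple_tupleOf : inducedTuple N hN c (tupleOf hN c hc hs) := by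
  intro j t
  rw [tupleOf_apply]
  exact nthSmallest_rnk hN (card_tripleSet hN hc hs _)
    (c_maps_tripleSet hN c (nthSmallest_mem hN (card_tripleSet hN hc hs _) t.isLt))

lemma tuple_unique {v : Fin N → Equiv.Perm (Fin 3)} (hv : inducedTuple N hN c v) :
    v = tupleOf hN c hc hs := by
  funext j
  ext t
  rw [tupleOf_apply, tupleFun, ← hv j t]
  exact (rnk_nthSmallest hN (card_tripleSet hN hc hs _) (v j t).isLt).symm

lemma rho_succ (k : ℕ) :
    rhoF hN c hc hs (k + 1) =
      tupleOf hN c hc hs ⟨k % N, Nat.mod_lt _ (hNpos hN)⟩ (rhoF hN c hc hs k) := by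
  apply Fin.ext
  rw [tupleOf_apply]
  show rho hN c (k + 1) = tupleFun hN c (k % N) (rho hN c k)
  unfold tupleFun rho
  rw [nthSmallest_rnk hN (card_tripleSet hN hc hs _)
    (orb_mem_tripleSet_mod hN c hc hs k), ← orb_succ hN c k]
  congr 1
  rw [← tripleSet_mod hN hc hs (k + 1)]
  have h' : k % N + 1 + (k / N) * N = k + 1 := by
    have := Nat.mod_add_div' k N
    omega
  rw [← h', tripleSet_add_mul_N hN hc hs]

lemma rho_zero : rhoF hN c hc hs 0 = 0 := by
  apply Fin.ext
  show rho hN c 0 = 0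
  unfold rho
  rw [Nat.zero_mod, orb_zero hN hc hs]
  exact rnk_zero hN (card_tripleSet hN hc hs 0)
    (by rw [← orb_zero hN hc hs]; exact orb_mem_tripleSet hN 0)

omit hc hs in
lemma rho_period (hc : c.IsCycle) (hs : c.support.card = 3 * N) (k : ℕ) :
    rhoF hN c hc hs (k + 3 * N) = rhoF hN c hc hs k := by
  apply Fin.ext
  show rho hN c (k + 3 * N) = rho hN c k
  unfold rho
  rw [orb_add_period hN hc hs]
  have h' : (k + 3 * N) % N = k % N := by
    conv_lhs => rw [show k + 3 * N = k + N * 3 from by ring]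
    exact Nat.add_mul_mod_self_left k N 3
  rw [h']

end tuple

section prodlem

variable {N : ℕ} (v : Fin N → Equiv.Perm (Fin 3))

/-- partial (reversed) products -/
def Q (m : ℕ) : Equiv.Perm (Fin 3) := (((List.ofFn v).take m).reverse).prod

lemma Q_zero : Q v 0 = 1 := by simp [Q]

lemma Q_succ {m : ℕ} (hm : m < N) : Q v (m + 1) = v ⟨m, hm⟩ * Q v m := by
  rw [Q, Q, List.take_succ, List.getElem?_eq_getElem (by simpa using hm), List.getElem_ofFn]
  simp

lemma Q_N : Q v N = ((List.ofFn v).reverse).prod := by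
  rw [Q, List.take_of_length_le (by simp)]

end prodlem

section rhorun

variable {N : ℕ} (hN : 0 < 3 * N) (c : Equiv.Perm (Fin (3 * N)))
  (hc : c.IsCycle) (hs : c.support.card = 3 * N)

lemma rho_run {k : ℕ} (hk : k % N = 0) :
    ∀ {m : ℕ}, m ≤ N →
      rhoF hN c hc hs (k + m) = Q (tupleOf hN c hc hs) m (rhoF hN c hc hs k) := by
  intro m
  induction m with
  | zero => intro _; simp [Q_zero]
  | succ m ih =>
    intro hm
    have hmN : m < N := by omega
    have hm' : (k + m) % N = m := by
      rw [Nat.add_mod, hk]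
      simp [Nat.mod_eq_of_lt hmN]
    have hfin : (⟨(k + m) % N, Nat.mod_lt _ (hNpos hN)⟩ : Fin N) = ⟨m, hmN⟩ := Fin.ext hm'
    rw [← Nat.add_assoc, rho_succ hN c hc hs (k + m), hfin, ih (by omega), Q_succ _ hmN,
      Equiv.Perm.mul_apply]

lemma rho_N : rhoF hN c hc hs N = Q (tupleOf hN c hc hs) N 0 := by
  have := rho_run hN c hc hs (k := 0) (Nat.zero_mod N) (le_refl N)
  rwa [Nat.zero_add, rho_zero hN c hc hs] at this

lemma rho_2N :
    rhoF hN c hc hs (2 * N) = Q (tupleOf hN c hc hs) N (rhoF hN c hc hs N) := by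
  have h : N % N = 0 := Nat.mod_self N
  have := rho_run hN c hc hs (k := N) h (le_refl N)
  have h2 : N + N = 2 * N := by ring
  rwa [h2] at this

lemma rho_distinct :
    rhoF hN c hc hs 0 ≠ rhoF hN c hc hs N ∧ rhoF hN c hc hs 0 ≠ rhoF hN c hc hs (2 * N)
      ∧ rhoF hN c hc hs N ≠ rhoF hN c hc hs (2 * N) := by
  have hNp := hNpos hN
  have key : ∀ i j : ℕ, i < 3 * N → j < 3 * N → i % N = 0 → j % N = 0 → i ≠ j →
      rhoF hN c hc hs i ≠ rhoF hN c hc hs j := by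
    intro i j hi hj hiN hjN hij h
    have h' : rho hN c i = rho hN c j := congrArg Fin.val h
    have mi := orb_mem_tripleSet_mod hN c hc hs i
    have mj := orb_mem_tripleSet_mod hN c hc hs j
    unfold rho at h'
    rw [hiN, hjN] at h'
    rw [hiN] at mi
    rw [hjN] at mj
    exact hij (orb_eq_orb hN hc hs hi hj (rnk_inj hN (card_tripleSet hN hc hs 0) mi mj h'))
  have h2N : (2 * N) % N = 0 := by
    rw [show 2 * N = 0 + N * 2 from by ring]
    simp
  exact ⟨key 0 N (by omega) (by omega) (Nat.zero_mod N) (Nat.mod_self N) (by omega),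
    key 0 (2 * N) (by omega) (by omega) (Nat.zero_mod N) h2N (by omega),
    key N (2 * N) (by omega) (by omega) (Nat.mod_self N) h2N (by omega)⟩

end rhorun

section s3facts

/-- the two 3-cycles in S₃ -/
def A3 : Equiv.Perm (Fin 3) := Equiv.swap 0 1 * Equiv.swap 1 2
def B3 : Equiv.Perm (Fin 3) := Equiv.swap 1 2 * Equiv.swap 0 1

lemma threecyc : ∀ g : Equiv.Perm (Fin 3), ∀ x : Fin 3,
    x ≠ g x → g x ≠ g (g x) → x ≠ g (g x) → g = A3 ∨ g = B3 := by decide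

lemma commfix : ∀ P g : Equiv.Perm (Fin 3), (P = A3 ∨ P = B3) → g 0 = 0 →
    g * P = P * g → g = 1 := by decide

lemma conjchoice : ∀ Pw Pv : Equiv.Perm (Fin 3), (Pw = A3 ∨ Pw = B3) → (Pv = A3 ∨ Pv = B3) →
    (if Pw = Pv then (1 : Equiv.Perm (Fin 3)) else Equiv.swap 1 2) 0 = 0 ∧
      (if Pw = Pv then (1 : Equiv.Perm (Fin 3)) else Equiv.swap 1 2) * Pw =
        Pv * (if Pw = Pv then (1 : Equiv.Perm (Fin 3)) else Equiv.swap 1 2) := by decide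

lemma fin3_cover : ∀ a b c t : Fin 3, a ≠ b → a ≠ c → b ≠ c →
    t = a ∨ t = b ∨ t = c := by decide

end s3facts

section pthree

variable {N : ℕ} (hN : 0 < 3 * N) (c : Equiv.Perm (Fin (3 * N)))
  (hc : c.IsCycle) (hs : c.support.card = 3 * N)

include hc hs

lemma P_threecyc : Q (tupleOf hN c hc hs) N = A3 ∨ Q (tupleOf hN c hc hs) N = B3 := by
  obtain ⟨h1, h2, h3⟩ := rho_distinct hN c hc hs
  refine threecyc _ (rhoF hN c hc hs 0) ?_ ?_ ?_
  · rw [rho_zero hN c hc hs, ← rho_N hN c hc hs]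
    rw [rho_zero hN c hc hs] at h1; exact h1
  · rw [rho_zero hN c hc hs, ← rho_N hN c hc hs, ← rho_2N hN c hc hs]
    exact h3
  · rw [rho_zero hN c hc hs, ← rho_N hN c hc hs, ← rho_2N hN c hc hs]
    rw [rho_zero hN c hc hs] at h2; exact h2

omit hc hs in
lemma mem_tripleSet_iff' (hc : c.IsCycle) (hs : c.support.card = 3 * N)
    {x : Fin (3 * N)} {i : ℕ} :
    x ∈ tripleSet N hN c i ↔ ∃ t < 3, x = orb N hN c (i + t * N) := by
  rw [mem_tripleSet_iff]
  constructor
  · rintro (h | h | h)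
    · exact ⟨0, by omega, by simpa using h⟩
    · exact ⟨1, by omega, by simpa using h⟩
    · exact ⟨2, by omega, by simpa using h⟩
  · rintro ⟨t, ht, rfl⟩
    interval_cases t
    · left; congr 1; ring
    · right; left; congr 1; ring
    · right; right; rfl

lemma tripleSet_disjoint {i i' : ℕ} (hi : i < N) (hi' : i' < N) {x : Fin (3 * N)}
    (hx : x ∈ tripleSet N hN c i) (hx' : x ∈ tripleSet N hN c i') : i = i' := by
  rw [mem_tripleSet_iff' hN c hc hs] at hx hx'
  obtain ⟨t, ht, rfl⟩ := hx
  obtain ⟨t', ht', he⟩ := hx'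
  exact (orb_trip_inj hN hc hs hi hi' ht ht' he).1

end pthree

section orbmod

variable {N : ℕ} (hN : 0 < 3 * N) (c : Equiv.Perm (Fin (3 * N)))
  (hc : c.IsCycle) (hs : c.support.card = 3 * N)

include hc hs

lemma orb_mod (m : ℕ) : orb N hN c m = orb N hN c (m % (3 * N)) :=
  (orb_eq_orb_iff hN hc hs).2 (Nat.mod_modEq m (3 * N)).symm

lemma rhoF_mod (m : ℕ) : rhoF hN c hc hs m = rhoF hN c hc hs (m % (3 * N)) := by
  apply Fin.ext
  show rho hN c m = rho hN c (m % (3 * N))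
  unfold rho
  rw [← orb_mod hN c hc hs, Nat.mod_mod_of_dvd m ⟨3, by ring⟩]

lemma rho_inj_trip {j : ℕ} (hj : j < N) {t t' : ℕ} (ht : t < 3) (ht' : t' < 3)
    (h : rhoF hN c hc hs (j + t * N) = rhoF hN c hc hs (j + t' * N)) : t = t' := by
  have h' : rho hN c (j + t * N) = rho hN c (j + t' * N) := congrArg Fin.val h
  unfold rho at h'
  have hm : (j + t * N) % N = j := by
    rw [Nat.add_mul_mod_self_right, Nat.mod_eq_of_lt hj]
  have hm' : (j + t' * N) % N = j := by
    rw [Nat.add_mul_mod_self_right, Nat.mod_eq_of_lt hj]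
  rw [hm, hm'] at h'
  have := rnk_inj hN (card_tripleSet hN hc hs j)
    (by have := orb_mem_tripleSet_mod hN c hc hs (j + t * N); rwa [hm] at this)
    (by have := orb_mem_tripleSet_mod hN c hc hs (j + t' * N); rwa [hm'] at this) h'
  exact (orb_trip_inj hN hc hs hj hj ht ht' this).2

end orbmod

section twist

variable {N : ℕ} (hN : 0 < 3 * N) (c : Equiv.Perm (Fin (3 * N)))
  (u : Fin N → Equiv.Perm (Fin 3)) (hc : c.IsCycle) (hs : c.support.card = 3 * N)

/-- the twisted orbit sequence -/
def twF (k : ℕ) : Fin (3 * N) :=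
  nthSmallest N hN (tripleSet N hN c (k % N))
    ((u ⟨k % N, Nat.mod_lt _ (hNpos hN)⟩ (rhoF hN c hc hs k)).val)

/-- the twisted orbit list -/
def twL : List (Fin (3 * N)) := (List.range (3 * N)).map (twF hN c u hc hs)

/-- the twisted cycle -/
def twC : Equiv.Perm (Fin (3 * N)) := (twL hN c u hc hs).formPerm

include hc hs

lemma twF_mem (k : ℕ) : twF hN c u hc hs k ∈ tripleSet N hN c (k % N) :=
  nthSmallest_mem hN (card_tripleSet hN hc hs _) (Fin.isLt _)

lemma rnk_twF (k : ℕ) :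
    rnk N (tripleSet N hN c (k % N)) (twF hN c u hc hs k) =
      (u ⟨k % N, Nat.mod_lt _ (hNpos hN)⟩ (rhoF hN c hc hs k)).val :=
  rnk_nthSmallest hN (card_tripleSet hN hc hs _) (Fin.isLt _)

lemma twF_inj {k k' : ℕ} (hk : k < 3 * N) (hk' : k' < 3 * N)
    (h : twF hN c u hc hs k = twF hN c u hc hs k') : k = k' := by
  have hmem' := twF_mem hN c u hc hs k'
  rw [← h] at hmem'
  have hmod : k % N = k' % N :=
    tripleSet_disjoint hN c hc hs (Nat.mod_lt _ (hNpos hN)) (Nat.mod_lt _ (hNpos hN))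
      (twF_mem hN c u hc hs k) hmem'
  have h1 := rnk_twF hN c u hc hs k
  have h2 := rnk_twF hN c u hc hs k'
  have hfin : (⟨k % N, Nat.mod_lt _ (hNpos hN)⟩ : Fin N) = ⟨k' % N, Nat.mod_lt _ (hNpos hN)⟩ :=
    Fin.ext hmod
  rw [h, hfin, hmod] at h1
  rw [h1] at h2
  have h4 : rhoF hN c hc hs k = rhoF hN c hc hs k' :=
    (u _).injective (Fin.ext h2)
  have h5 : rho hN c k = rho hN c k' := congrArg Fin.val h4
  unfold rho at h5
  rw [hmod] at h5
  have h6 := rnk_inj hN (card_tripleSet hN hc hs (k' % N))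
    (by have := orb_mem_tripleSet_mod hN c hc hs k; rwa [hmod] at this)
    (orb_mem_tripleSet_mod hN c hc hs k') h5
  exact orb_eq_orb hN hc hs hk hk' h6

lemma twL_length : (twL hN c u hc hs).length = 3 * N := by simp [twL]

lemma twL_getElem (k : ℕ) (hk : k < (twL hN c u hc hs).length) :
    (twL hN c u hc hs)[k] = twF hN c u hc hs k := by
  simp [twL]

lemma twL_nodup : (twL hN c u hc hs).Nodup := by
  refine List.Nodup.map_on ?_ List.nodup_range
  intro k hk k' hk' h
  exact twF_inj hN c u hc hs (List.mem_range.1 hk) (List.mem_range.1 hk') h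

lemma twC_isCycle : (twC hN c u hc hs).IsCycle :=
  List.isCycle_formPerm (twL_nodup hN c u hc hs) (by rw [twL_length]; omega)

lemma twC_support_card : (twC hN c u hc hs).support.card = 3 * N := by
  rw [twC, List.support_formPerm_of_nodup _ (twL_nodup hN c u hc hs)
    (fun x hx => by
      have h3 := congrArg List.length hx
      rw [twL_length] at h3
      simp only [List.length_singleton] at h3
      omega),
    List.toFinset_card_of_nodup (twL_nodup hN c u hc hs), twL_length]

variable (hu : u ⟨0, hNpos hN⟩ 0 = 0)

include hu

lemma twF_zero : twF hN c u hc hs 0 = ⟨0, hN⟩ := by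
  unfold twF
  have h0 : (⟨0 % N, Nat.mod_lt _ (hNpos hN)⟩ : Fin N) = ⟨0, hNpos hN⟩ := Fin.ext (Nat.zero_mod N)
  rw [h0, rho_zero hN c hc hs, hu]
  have hmem : (⟨0, hN⟩ : Fin (3 * N)) ∈ tripleSet N hN c (0 % N) := by
    rw [Nat.zero_mod, ← orb_zero hN hc hs]
    exact orb_mem_tripleSet hN 0
  rw [show ((0 : Fin 3) : ℕ) = 0 from rfl]
  exact nthSmallest_zero hN (card_tripleSet hN hc hs _) hmem

lemma orb_twC {k : ℕ} (hk : k < 3 * N) :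
    orb N hN (twC hN c u hc hs) k = twF hN c u hc hs k := by
  have hlen : 0 < (twL hN c u hc hs).length := by rw [twL_length]; omega
  have h := List.formPerm_pow_apply_getElem (twL hN c u hc hs) (twL_nodup hN c u hc hs) k 0 hlen
  rw [twL_getElem hN c u hc hs 0 hlen, twF_zero hN c u hc hs hu] at h
  have hidx : (0 + k) % (twL hN c u hc hs).length = k := by
    rw [twL_length, Nat.zero_add, Nat.mod_eq_of_lt hk]
  show ((twL hN c u hc hs).formPerm ^ k) ⟨0, hN⟩ = _
  rw [h, twL_getElem hN c u hc hs _ (Nat.mod_lt _ hlen), hidx]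

lemma orb_twC' (k : ℕ) :
    orb N hN (twC hN c u hc hs) k = twF hN c u hc hs (k % (3 * N)) := by
  rw [orb_mod hN _ (twC_isCycle hN c u hc hs) (twC_support_card hN c u hc hs),
    orb_twC hN c u hc hs hu (Nat.mod_lt _ hN)]

lemma tripleSet_twC (i : ℕ) :
    tripleSet N hN (twC hN c u hc hs) i = tripleSet N hN c i := by
  have hcy := twC_isCycle hN c u hc hs
  have hsc := twC_support_card hN c u hc hs
  rw [tripleSet_mod hN hcy hsc i, tripleSet_mod hN hc hs i]
  have hj : i % N < N := Nat.mod_lt _ (hNpos hN)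
  refine Finset.eq_of_subset_of_card_le ?_ (by
    rw [card_tripleSet hN hc hs, card_tripleSet hN hcy hsc])
  intro x hx
  rw [mem_tripleSet_iff' hN _ hcy hsc] at hx
  obtain ⟨t, ht, rfl⟩ := hx
  have hk : i % N + t * N < 3 * N := by nlinarith
  rw [orb_twC hN c u hc hs hu hk]
  have hmem := twF_mem hN c u hc hs (i % N + t * N)
  have hmod : (i % N + t * N) % N = i % N := by
    rw [Nat.add_mul_mod_self_right, Nat.mod_mod_of_dvd _ dvd_rfl]
  rwa [hmod] at hmem

lemma rhoF_twC (hc' : (twC hN c u hc hs).IsCycle) (hs' : (twC hN c u hc hs).support.card = 3 * N)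
    {k : ℕ} (hk : k < 3 * N) :
    rhoF hN (twC hN c u hc hs) hc' hs' k
      = u ⟨k % N, Nat.mod_lt _ (hNpos hN)⟩ (rhoF hN c hc hs k) := by
  apply Fin.ext
  show rho hN (twC hN c u hc hs) k = _
  unfold rho
  rw [orb_twC hN c u hc hs hu hk, tripleSet_twC hN c u hc hs hu]
  exact rnk_twF hN c u hc hs k

end twist

section twist2

variable {N : ℕ} (hN : 0 < 3 * N) (c : Equiv.Perm (Fin (3 * N)))
  (u : Fin N → Equiv.Perm (Fin 3)) (hc : c.IsCycle) (hs : c.support.card = 3 * N)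
  (hu : u ⟨0, hNpos hN⟩ 0 = 0)

include hc hs hu

lemma inducedTuple_twC :
    inducedTuple N hN (twC hN c u hc hs)
      (fun j => u ⟨(j.val + 1) % N, Nat.mod_lt _ (hNpos hN)⟩ * tupleOf hN c hc hs j
        * (u j)⁻¹) := by
  intro j t
  have hjN : j.val < N := j.isLt
  simp only [Equiv.Perm.mul_apply]
  have hd01 : rhoF hN c hc hs (j.val + 0 * N) ≠ rhoF hN c hc hs (j.val + 1 * N) := by
    intro h
    have := rho_inj_trip hN c hc hs hjN (by omega) (by omega) h; omega
  have hd02 : rhoF hN c hc hs (j.val + 0 * N) ≠ rhoF hN c hc hs (j.val + 2 * N) := by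
    intro h
    have := rho_inj_trip hN c hc hs hjN (by omega) (by omega) h; omega
  have hd12 : rhoF hN c hc hs (j.val + 1 * N) ≠ rhoF hN c hc hs (j.val + 2 * N) := by
    intro h
    have := rho_inj_trip hN c hc hs hjN (by omega) (by omega) h; omega
  obtain ⟨sv, hs3, hrs⟩ : ∃ sv, sv < 3 ∧ ((u j)⁻¹ t) = rhoF hN c hc hs (j.val + sv * N) := by
    rcases fin3_cover _ _ _ ((u j)⁻¹ t) hd01 hd02 hd12 with h | h | h
    exacts [⟨0, by omega, h⟩, ⟨1, by omega, h⟩, ⟨2, by omega, h⟩]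
  set k := j.val + sv * N with hkdef
  have hk3 : k < 3 * N := by
    have hsv : sv * N ≤ 2 * N := Nat.mul_le_mul_right N (by omega)
    omega
  have hkN : k % N = j.val := by
    rw [hkdef, Nat.add_mul_mod_self_right, Nat.mod_eq_of_lt hjN]
  have hfin : (⟨k % N, Nat.mod_lt _ (hNpos hN)⟩ : Fin N) = j := Fin.ext hkN
  have hRHS : nthSmallest N hN (tripleSet N hN (twC hN c u hc hs) j.val) t.val
      = orb N hN (twC hN c u hc hs) k := by
    rw [tripleSet_twC hN c u hc hs hu, orb_twC hN c u hc hs hu hk3]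
    unfold twF
    rw [hfin, ← hrs, Equiv.Perm.coe_inv, Equiv.apply_symm_apply, hkN]
  rw [hRHS, ← orb_succ hN _ k, orb_twC' hN c u hc hs hu (k + 1)]
  unfold twF
  have e1 : (k + 1) % (3 * N) % N = (j.val + 1) % N := by
    rw [Nat.mod_mod_of_dvd _ ⟨3, by ring⟩]
    rw [show k + 1 = j.val + 1 + sv * N from by omega, Nat.add_mul_mod_self_right]
  have hfin2 : (⟨(k + 1) % (3 * N) % N, Nat.mod_lt _ (hNpos hN)⟩ : Fin N)
      = ⟨(j.val + 1) % N, Nat.mod_lt _ (hNpos hN)⟩ := Fin.ext e1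
  have e2 : rhoF hN c hc hs ((k + 1) % (3 * N)) =
      tupleOf hN c hc hs j ((u j)⁻¹ t) := by
    rw [← rhoF_mod hN c hc hs (k + 1), rho_succ hN c hc hs k, hfin, ← hrs]
  congr 1
  · rw [tripleSet_twC hN c u hc hs hu, tripleSet_mod hN hc hs (j.val + 1)]
    congr 1
    exact e1.symm
  · rw [hfin2, e2]

lemma tupleOf_twC :
    tupleOf hN (twC hN c u hc hs) (twC_isCycle hN c u hc hs) (twC_support_card hN c u hc hs)
      = fun j => u ⟨(j.val + 1) % N, Nat.mod_lt _ (hNpos hN)⟩ * tupleOf hN c hc hs j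
        * (u j)⁻¹ :=
  (tuple_unique hN _ (twC_isCycle hN c u hc hs) (twC_support_card hN c u hc hs)
    (inducedTuple_twC hN c u hc hs hu)).symm

lemma twC_comp (u' : Fin N → Equiv.Perm (Fin 3)) :
    twC hN (twC hN c u hc hs) u' (twC_isCycle hN c u hc hs) (twC_support_card hN c u hc hs)
      = twC hN c (fun j => u' j * u j) hc hs := by
  have hl : twL hN (twC hN c u hc hs) u' (twC_isCycle hN c u hc hs)
      (twC_support_card hN c u hc hs) = twL hN c (fun j => u' j * u j) hc hs := by
    apply List.ext_getElem (by rw [twL_length, twL_length])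
    intro k h1 h2
    have hk : k < 3 * N := by rwa [twL_length] at h1
    rw [twL_getElem _ _ _ _ _ k h1, twL_getElem _ _ _ _ _ k h2]
    unfold twF
    rw [rhoF_twC hN c u hc hs hu _ _ hk, tripleSet_twC hN c u hc hs hu]
    rw [Equiv.Perm.mul_apply]
  exact congrArg List.formPerm hl

omit hu in
lemma twC_one : twC hN c (fun _ => 1) hc hs = c := by
  have h1 : ∀ k : ℕ, twF hN c (fun _ => 1) hc hs k = orb N hN c k := by
    intro k
    unfold twF
    simp only [Equiv.Perm.coe_one, id_eq]
    exact nthSmallest_rnk hN (card_tripleSet hN hc hs _) (orb_mem_tripleSet_mod hN c hc hs k)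
  apply Equiv.ext
  intro x
  obtain ⟨k, hk, rfl⟩ := orb_surj hN hc hs x
  show (twL hN c (fun _ => 1) hc hs).formPerm (orb N hN c k) = c (orb N hN c k)
  have hlen : k < (twL hN c (fun _ => 1) hc hs).length := by rw [twL_length]; exact hk
  conv_lhs => rw [← h1 k, ← twL_getElem hN c (fun _ => 1) hc hs k hlen]
  rw [List.formPerm_apply_getElem _ (twL_nodup hN c _ hc hs) k hlen]
  rw [twL_getElem hN c _ hc hs _ (Nat.mod_lt _ (by rw [twL_length]; omega)), h1]
  have e : (k + 1) % (twL hN c (fun _ => 1) hc hs).length = (k + 1) % (3 * N) := by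
    rw [twL_length]
  rw [e, ← orb_mod hN c hc hs (k + 1), orb_succ]

end twist2

section cyclecount

variable {N : ℕ} (hN : 0 < 3 * N)

include hN in
lemma card_fullcycles :
    Nat.card {c : Equiv.Perm (Fin (3 * N)) // c.IsCycle ∧ c.support.card = 3 * N}
      = (3 * N - 1).factorial := by
  classical
  set Z : Fin (3 * N) := ⟨0, hN⟩ with hZ
  -- the map to linear orders
  have hfb : ∀ c : {c : Equiv.Perm (Fin (3 * N)) // c.IsCycle ∧ c.support.card = 3 * N},
      Function.Bijective (fun k : Fin (3 * N - 1) =>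
        (⟨orb N hN c.1 (k.val + 1), by
          intro h
          have h0 : orb N hN c.1 (k.val + 1) = orb N hN c.1 0 := by
            rw [h, orb_zero hN c.2.1 c.2.2]
          have := orb_eq_orb hN c.2.1 c.2.2 (by omega) (by omega) h0
          omega⟩ : {x : Fin (3 * N) // x ≠ Z})) := by
    intro c
    rw [Fintype.bijective_iff_injective_and_card]
    constructor
    · intro k k' h
      have h' : orb N hN c.1 (k.val + 1) = orb N hN c.1 (k'.val + 1) :=
        congrArg Subtype.val h
      have := orb_eq_orb hN c.2.1 c.2.2 (by omega) (by omega) h'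
      exact Fin.ext (by omega)
    · rw [Fintype.card_subtype_compl, Fintype.card_subtype_eq, Fintype.card_fin,
        Fintype.card_fin]
  set Φ : {c : Equiv.Perm (Fin (3 * N)) // c.IsCycle ∧ c.support.card = 3 * N} →
      (Fin (3 * N - 1) ≃ {x : Fin (3 * N) // x ≠ Z}) :=
    fun c => Equiv.ofBijective _ (hfb c) with hΦ
  have horb : ∀ c : {c : Equiv.Perm (Fin (3 * N)) // c.IsCycle ∧ c.support.card = 3 * N},
      ∀ k : ℕ, ∀ hk : k < 3 * N - 1, orb N hN c.1 (k + 1) = (Φ c ⟨k, by omega⟩).val := by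
    intro c k hk
    rfl
  have hinj : Function.Injective Φ := by
    intro c c' h
    have horb2 : ∀ m, m < 3 * N → orb N hN c.1 m = orb N hN c'.1 m := by
      intro m hm
      match m with
      | 0 => rw [orb_zero hN c.2.1 c.2.2, orb_zero hN c'.2.1 c'.2.2]
      | (k+1) =>
        rw [horb c k (by omega), horb c' k (by omega), h]
    apply Subtype.ext
    apply Equiv.ext
    intro x
    obtain ⟨k, hk, rfl⟩ := orb_surj hN c.2.1 c.2.2 x
    rw [← orb_succ hN c.1 k, horb2 k hk, ← orb_succ hN c'.1 k]
    rcases Nat.lt_or_ge (k + 1) (3 * N) with h1 | h1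
    · rw [horb2 (k+1) h1]
    · have hk1 : k + 1 = 3 * N := by omega
      rw [hk1, orb_mod hN c.1 c.2.1 c.2.2, orb_mod hN c'.1 c'.2.1 c'.2.2, Nat.mod_self,
        orb_zero hN c.2.1 c.2.2, orb_zero hN c'.2.1 c'.2.2]
  have hsurj : Function.Surjective Φ := by
    intro e
    set L : List (Fin (3 * N)) := Z :: List.ofFn (fun k : Fin (3 * N - 1) => (e k).val) with hL
    have hlen : L.length = 3 * N := by
      rw [hL, List.length_cons, List.length_ofFn]
      omega
    have hnodup : L.Nodup := by
      rw [hL, List.nodup_cons]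
      constructor
      · intro hmem
        obtain ⟨k, hk⟩ := List.mem_ofFn.1 hmem
        exact (e k).2 hk
      · rw [List.nodup_ofFn]
        intro k k' hkk
        exact e.injective (Subtype.ext hkk)
    set d : Equiv.Perm (Fin (3 * N)) := L.formPerm with hd
    have hdc : d.IsCycle := List.isCycle_formPerm hnodup (by rw [hlen]; omega)
    have hds : d.support.card = 3 * N := by
      rw [hd, List.support_formPerm_of_nodup _ hnodup
        (fun x hx => by
          have h3 := congrArg List.length hx
          rw [hlen] at h3
          simp only [List.length_singleton] at h3
          omega),
        List.toFinset_card_of_nodup hnodup, hlen]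
    have hL0 : L[0]'(by rw [hlen]; omega) = Z := rfl
    have hdorb : ∀ m : ℕ, ∀ hm : m < 3 * N, orb N hN d m = L[m]'(by rwa [hlen]) := by
      intro m hm
      have h := List.formPerm_pow_apply_getElem L hnodup m 0 (by rw [hlen]; omega)
      rw [hL0] at h
      have hidx : (0 + m) % L.length = m := by rw [hlen, Nat.zero_add, Nat.mod_eq_of_lt hm]
      show (L.formPerm ^ m) Z = _
      rw [h]
      congr 1
    refine ⟨⟨d, hdc, hds⟩, ?_⟩
    apply Equiv.ext
    intro k
    apply Subtype.ext
    have h1 := (horb ⟨d, hdc, hds⟩ k.val k.isLt).symm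
    rw [h1, hdorb (k.val + 1) (by omega)]
    show (Z :: List.ofFn fun k : Fin (3 * N - 1) =>
        ((e k) : Fin (3 * N)))[k.val + 1]'(by simp) = _
    rw [List.getElem_cons_succ, List.getElem_ofFn]
  have hcards := Nat.card_eq_of_bijective Φ ⟨hinj, hsurj⟩
  rw [hcards, Nat.card_eq_fintype_card, Fintype.card_equiv
    (Fintype.equivOfCardEq (by
      rw [Fintype.card_subtype_compl, Fintype.card_subtype_eq, Fintype.card_fin,
        Fintype.card_fin])), Fintype.card_fin]

end cyclecount

section hcount

variable {N : ℕ} (hN : 0 < 3 * N)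

lemma card_stab : Nat.card {g : Equiv.Perm (Fin 3) // g 0 = 0} = 2 := by
  rw [Nat.card_eq_fintype_card]
  decide

include hN in
lemma card_H : Nat.card {u : Fin N → Equiv.Perm (Fin 3) // u ⟨0, hNpos hN⟩ 0 = 0}
    = 2 * 6 ^ (N - 1) := by
  have hE : {u : Fin N → Equiv.Perm (Fin 3) // u ⟨0, hNpos hN⟩ 0 = 0} ≃
      {g : Equiv.Perm (Fin 3) // g 0 = 0} × (Fin (N - 1) → Equiv.Perm (Fin 3)) :=
    { toFun := fun u => (⟨u.1 ⟨0, hNpos hN⟩, u.2⟩, fun j => u.1 ⟨j.val + 1, by omega⟩)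
      invFun := fun p => ⟨fun j => if h : j.val = 0 then p.1.1 else p.2 ⟨j.val - 1, by omega⟩,
        by simpa using p.1.2⟩
      left_inv := by
        intro u
        apply Subtype.ext
        funext j
        by_cases h : j.val = 0
        · simp only [h, dif_pos]
          exact congrArg u.1 (Fin.ext h.symm)
        · simp only [h, dif_neg, not_false_iff]
          exact congrArg u.1 (Fin.ext (show j.val - 1 + 1 = j.val by omega))
      right_inv := by
        intro p
        refine Prod.ext ?_ ?_
        · apply Subtype.ext
          simp
        · funext j
          simp only []
          rw [dif_neg (by omega)]
          exact congrArg p.2 (Fin.ext (show j.val + 1 - 1 = j.val by omega)) }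
  rw [Nat.card_congr hE, Nat.card_prod, card_stab, Nat.card_fun, Nat.card_eq_fintype_card,
    Nat.card_eq_fintype_card, Fintype.card_perm, Fintype.card_fin, Fintype.card_fin]
  norm_num [Nat.factorial]

end hcount

section congrlems

variable {N : ℕ} (hN : 0 < 3 * N)

lemma conj_rel {G : Type*} [Group G] {a a' b b' x : G} (h : a * x * b⁻¹ = a' * x * b'⁻¹) :
    a'⁻¹ * a = x * (b'⁻¹ * b) * x⁻¹ := by
  have h2 : a = a' * x * b'⁻¹ * b * x⁻¹ := by
    rw [← h]; group
  rw [h2]; group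

lemma tupleOf_congr {d d' : Equiv.Perm (Fin (3 * N))} (h : d = d')
    (hc1 : d.IsCycle) (hs1 : d.support.card = 3 * N)
    (hc2 : d'.IsCycle) (hs2 : d'.support.card = 3 * N) :
    tupleOf hN d hc1 hs1 = tupleOf hN d' hc2 hs2 := by
  subst h; rfl

lemma twC_congr {d d' : Equiv.Perm (Fin (3 * N))} (h : d = d')
    (u : Fin N → Equiv.Perm (Fin 3))
    (hc1 : d.IsCycle) (hs1 : d.support.card = 3 * N)
    (hc2 : d'.IsCycle) (hs2 : d'.support.card = 3 * N) :
    twC hN d u hc1 hs1 = twC hN d' u hc2 hs2 := by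
  subst h; rfl

end congrlems
end FibEq

open FibEq in
/-- The fibers of the map `c ↦ (p₁(c), …, p_N(c))`, from `3N`-cycles in `S_{3N}` to
`N`-tuples in `S₃^N` whose product is a 3-cycle, are equinumerous: every fiber over one
of the `2·6^{N-1}` possible targets has cardinality `(3N-1)!/(2·6^{N-1})` (stated
multiplicatively, as the division is exact). -/
theorem fibers_equinumerous (N : ℕ) (hN : 0 < 3 * N)
    (v : Fin N → Equiv.Perm (Fin 3))
    (hv : ((List.ofFn v).reverse).prod = Equiv.swap 0 1 * Equiv.swap 1 2 ∨
          ((List.ofFn v).reverse).prod = Equiv.swap 1 2 * Equiv.swap 0 1) :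
    Nat.card {c : Equiv.Perm (Fin (3 * N)) //
        c.IsCycle ∧ c.support.card = 3 * N ∧ inducedTuple N hN c v} *
      (2 * 6 ^ (N - 1)) = (3 * N - 1).factorial := by
  classical
  have hPv : Q v N = A3 ∨ Q v N = B3 := by
    rw [Q_N v]
    exact hv
  set F := {c : Equiv.Perm (Fin (3 * N)) //
      c.IsCycle ∧ c.support.card = 3 * N ∧ inducedTuple N hN c v} with hF
  set H := {u : Fin N → Equiv.Perm (Fin 3) // u ⟨0, hNpos hN⟩ 0 = 0} with hH
  set Φ : F × H → {c : Equiv.Perm (Fin (3 * N)) // c.IsCycle ∧ c.support.card = 3 * N} :=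
    fun p => ⟨twC hN p.1.1 p.2.1 p.1.2.1 p.1.2.2.1,
      twC_isCycle hN p.1.1 p.2.1 p.1.2.1 p.1.2.2.1,
      twC_support_card hN p.1.1 p.2.1 p.1.2.1 p.1.2.2.1⟩ with hΦ
  have hinj : Function.Injective Φ := by
    rintro ⟨⟨c, hc, hsc, hic⟩, ⟨u, hu⟩⟩ ⟨⟨c', hc', hsc', hic'⟩, ⟨u', hu'⟩⟩ h
    have h' : twC hN c u hc hsc = twC hN c' u' hc' hsc' := congrArg Subtype.val h
    have hv1 : v = tupleOf hN c hc hsc := tuple_unique hN c hc hsc hic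
    have hv2 : v = tupleOf hN c' hc' hsc' := tuple_unique hN c' hc' hsc' hic'
    have hEq : (fun j : Fin N => u ⟨(j.val + 1) % N, Nat.mod_lt _ (hNpos hN)⟩ * v j * (u j)⁻¹)
        = (fun j : Fin N => u' ⟨(j.val + 1) % N, Nat.mod_lt _ (hNpos hN)⟩ * v j * (u' j)⁻¹) := by
      have t1 := tupleOf_twC hN c u hc hsc hu
      have t2 := tupleOf_twC hN c' u' hc' hsc' hu'
      have t3 := tupleOf_congr hN h' (twC_isCycle hN c u hc hsc) (twC_support_card hN c u hc hsc)
        (twC_isCycle hN c' u' hc' hsc') (twC_support_card hN c' u' hc' hsc')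
      rw [t1, t2, ← hv1, ← hv2] at t3
      exact t3
    set d0 : Equiv.Perm (Fin 3) := (u' ⟨0, hNpos hN⟩)⁻¹ * u ⟨0, hNpos hN⟩ with hd0
    have claim : ∀ m : ℕ, ∀ hm : m < N,
        (u' ⟨m, hm⟩)⁻¹ * u ⟨m, hm⟩ = Q v m * d0 * (Q v m)⁻¹ := by
      intro m
      induction m with
      | zero =>
        intro hm
        rw [Q_zero]
        simp only [one_mul, inv_one, mul_one]
        rfl
      | succ m ih =>
        intro hm
        have hjm : m < N := by omega
        have hj := congrFun hEq ⟨m, hjm⟩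
        have hfin : (⟨(m + 1) % N, Nat.mod_lt _ (hNpos hN)⟩ : Fin N) = ⟨m + 1, hm⟩ :=
          Fin.ext (Nat.mod_eq_of_lt hm)
        simp only [hfin] at hj
        have hcr := conj_rel hj
        rw [hcr, ih hjm, Q_succ v hjm]
        group
    have hwrap : d0 * Q v N = Q v N * d0 := by
      have hN1 : N - 1 < N := by omega
      have hj := congrFun hEq ⟨N - 1, hN1⟩
      have hfin : (⟨((N - 1 : ℕ) + 1) % N, Nat.mod_lt _ (hNpos hN)⟩ : Fin N)
          = ⟨0, hNpos hN⟩ := Fin.ext (show ((N - 1) + 1) % N = 0 by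
            rw [show (N - 1) + 1 = N from by omega, Nat.mod_self])
      simp only [hfin] at hj
      have hcr := conj_rel hj
      have hQN : Q v N = v ⟨N - 1, hN1⟩ * Q v (N - 1) := by
        have h8 := Q_succ v hN1
        rwa [show (N - 1) + 1 = N from by omega] at h8
      rw [claim (N - 1) hN1] at hcr
      have hcr2 : d0 = v ⟨N - 1, hN1⟩ * (Q v (N - 1) * d0 * (Q v (N - 1))⁻¹)
          * (v ⟨N - 1, hN1⟩)⁻¹ := hcr
      rw [hQN]
      nth_rewrite 1 [hcr2]
      group
    have hd0fix : d0 0 = 0 := by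
      show ((u' ⟨0, hNpos hN⟩)⁻¹ * u ⟨0, hNpos hN⟩) 0 = 0
      rw [Equiv.Perm.mul_apply, hu, Equiv.Perm.inv_eq_iff_eq]
      exact hu'.symm
    have hd01 : d0 = 1 := commfix (Q v N) d0 hPv hd0fix hwrap
    have huu : u = u' := by
      funext j
      have hcl := claim j.val j.isLt
      rw [hd01] at hcl
      have h1 : (u' ⟨j.val, j.isLt⟩)⁻¹ * u ⟨j.val, j.isLt⟩ = 1 := by rw [hcl]; group
      have h2 := inv_mul_eq_one.1 h1
      rw [show (⟨j.val, j.isLt⟩ : Fin N) = j from Fin.ext rfl] at h2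
      exact h2.symm
    subst huu
    have hcc' : c = c' := by
      calc c = twC hN c (fun _ => 1) hc hsc := (twC_one hN c hc hsc).symm
        _ = twC hN c (fun j => (u j)⁻¹ * u j) hc hsc := by
            rw [show (fun j : Fin N => (u j)⁻¹ * u j)
              = (fun _ : Fin N => (1 : Equiv.Perm (Fin 3))) from funext fun j => by simp]
        _ = twC hN (twC hN c u hc hsc) (fun j => (u j)⁻¹)
              (twC_isCycle hN c u hc hsc) (twC_support_card hN c u hc hsc) :=
            (twC_comp hN c u hc hsc hu _).symm
        _ = twC hN (twC hN c' u hc' hsc') (fun j => (u j)⁻¹)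
              (twC_isCycle hN c' u hc' hsc') (twC_support_card hN c' u hc' hsc') :=
            twC_congr hN h' _ _ _ _ _
        _ = twC hN c' (fun j => (u j)⁻¹ * u j) hc' hsc' := twC_comp hN c' u hc' hsc' hu _
        _ = twC hN c' (fun _ => 1) hc' hsc' := by
            rw [show (fun j : Fin N => (u j)⁻¹ * u j)
              = (fun _ : Fin N => (1 : Equiv.Perm (Fin 3))) from funext fun j => by simp]
        _ = c' := twC_one hN c' hc' hsc'
    subst hcc'
    rfl
  have hsurj : Function.Surjective Φ := by
    rintro ⟨d, hdc, hds⟩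
    have hPw : Q (tupleOf hN d hdc hds) N = A3 ∨ Q (tupleOf hN d hdc hds) N = B3 :=
      P_threecyc hN d hdc hds
    set w := tupleOf hN d hdc hds with hw
    set g0 : Equiv.Perm (Fin 3) := if Q w N = Q v N then 1 else Equiv.swap 1 2 with hg0
    obtain ⟨hgfix, hgconj⟩ := conjchoice (Q w N) (Q v N) hPw hPv
    set ub : Fin N → Equiv.Perm (Fin 3) := fun j => Q v j.val * g0 * (Q w j.val)⁻¹ with hub
    have hub0 : ub ⟨0, hNpos hN⟩ = g0 := by
      rw [hub]
      simp [Q_zero]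
    have hubfix : ub ⟨0, hNpos hN⟩ 0 = 0 := by
      rw [hub0]
      exact hgfix
    have hfunv : (fun j : Fin N => ub ⟨(j.val + 1) % N, Nat.mod_lt _ (hNpos hN)⟩
        * tupleOf hN d hdc hds j * (ub j)⁻¹) = v := by
      funext j
      rcases Nat.lt_or_ge (j.val + 1) N with hlt | hge
      · have hfin : (⟨(j.val + 1) % N, Nat.mod_lt _ (hNpos hN)⟩ : Fin N) = ⟨j.val + 1, hlt⟩ :=
          Fin.ext (Nat.mod_eq_of_lt hlt)
        rw [hfin, ← hw]
        show Q v (j.val + 1) * g0 * (Q w (j.val + 1))⁻¹ * w j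
          * (Q v j.val * g0 * (Q w j.val)⁻¹)⁻¹ = v j
        rw [Q_succ v j.isLt, Q_succ w j.isLt,
          show (⟨j.val, j.isLt⟩ : Fin N) = j from Fin.ext rfl]
        group
      · have hNj : j.val + 1 = N := by omega
        have hfin : (⟨(j.val + 1) % N, Nat.mod_lt _ (hNpos hN)⟩ : Fin N) = ⟨0, hNpos hN⟩ :=
          Fin.ext (show (j.val + 1) % N = 0 by rw [hNj, Nat.mod_self])
        rw [hfin, ← hw, hub0]
        show g0 * w j * (Q v j.val * g0 * (Q w j.val)⁻¹)⁻¹ = v j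
        have hQNv : Q v N = v j * Q v j.val := by
          have h8 := Q_succ v j.isLt
          rw [show (⟨j.val, j.isLt⟩ : Fin N) = j from Fin.ext rfl] at h8
          rwa [hNj] at h8
        have hQNw : Q w N = w j * Q w j.val := by
          have h8 := Q_succ w j.isLt
          rw [show (⟨j.val, j.isLt⟩ : Fin N) = j from Fin.ext rfl] at h8
          rwa [hNj] at h8
        have hkey : g0 * (w j * Q w j.val) = v j * Q v j.val * g0 := by
          rw [← hQNw, ← hQNv]
          exact hgconj
        rw [show v j = v j * Q v j.val * g0 * g0⁻¹ * (Q v j.val)⁻¹ from by group, ← hkey]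
        group
    have h1 := twC_isCycle hN d ub hdc hds
    have h2 := twC_support_card hN d ub hdc hds
    have hind : inducedTuple N hN (twC hN d ub hdc hds) v := by
      have h7 := inducedTuple_twC hN d ub hdc hds hubfix
      rwa [hfunv] at h7
    refine ⟨(⟨twC hN d ub hdc hds, h1, h2, hind⟩, ⟨fun j => (ub j)⁻¹, ?_⟩), ?_⟩
    · rw [Equiv.Perm.inv_eq_iff_eq]
      exact hubfix.symm
    · apply Subtype.ext
      show twC hN (twC hN d ub hdc hds) (fun j => (ub j)⁻¹) _ _ = d
      rw [twC_comp hN d ub hdc hds hubfix _]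
      rw [show (fun j : Fin N => (ub j)⁻¹ * ub j)
        = (fun _ : Fin N => (1 : Equiv.Perm (Fin 3))) from funext fun j => by simp]
      exact twC_one hN d hdc hds
  have hcards := Nat.card_eq_of_bijective Φ ⟨hinj, hsurj⟩
  rw [Nat.card_prod, card_fullcycles hN] at hcards
  rw [hH] at hcards
  rw [card_H hN] at hcards
  exact hcards
end
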